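/- arXiv:2402.13099 — 12 statements merged into one kernel-verified Lean document; each statement's English description precedes it below -/
import Mathlib

section
/- For any finite category C, the idempotent completion (Karoubi envelope) of C is equivalent to the ind-completion of C; that is, there is an equivalence of categories Karoubi C ≌ Ind C. -/
open CategoryTheory CategoryTheory.Idempotents CategoryTheory.Limits Opposite

universe u

namespace IndKaroubiAux

variable {C : Type u} [SmallCategory C]

/-- Explicit embedding of `Karoubi C` into presheaves on `C`. -/
@[simps]
def kP (C : Type u) [SmallCategory C] : Karoubi C ⥤ (Cᵒᵖ ⥤ Type u) where
  obj Q :=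
    { obj := fun c => { f : c.unop ⟶ Q.X // f ≫ Q.p = f }
      map := fun g => TypeCat.ofHom fun x => ⟨g.unop ≫ x.1, by rw [Category.assoc, x.2]⟩
      map_id := by intro c; ext x; simp
      map_comp := by intro c d e g h; ext x; simp }
  map f :=
    { app := fun c => TypeCat.ofHom fun x => ⟨x.1 ≫ f.f, by rw [Category.assoc, Karoubi.comp_p]⟩
      naturality := by intro c d g; ext x; simp }
  map_id := by
    intro Q
    refine NatTrans.ext (funext fun c => ConcreteCategory.hom_ext _ _ fun x => Subtype.ext ?_)
    simpa using x.2
  map_comp := by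
    intro Q R S f g
    refine NatTrans.ext (funext fun c => ConcreteCategory.hom_ext _ _ fun x => Subtype.ext ?_)
    simp

lemma kP_key {Q Q' : Karoubi C} (η : (kP C).obj Q ⟶ (kP C).obj Q')
    (c : Cᵒᵖ) (x : ((kP C).obj Q).obj c) :
    (η.app c x).1 = x.1 ≫ (η.app (op Q.X) ⟨Q.p, Q.idem⟩).1 := by
  have h := NatTrans.naturality_apply η (Quiver.Hom.op x.1) (⟨Q.p, Q.idem⟩ : ((kP C).obj Q).obj (op Q.X))
  have h4 : ((kP C).obj Q).map (Quiver.Hom.op x.1) ⟨Q.p, Q.idem⟩ = x :=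
    Subtype.ext x.2
  rw [h4] at h
  rw [h]
  rfl

instance : (kP C).Faithful where
  map_injective := by
    intro Q Q' f g h
    have := congrArg (fun η => (η.app (op Q.X) ⟨Q.p, Q.idem⟩).1) h
    change Q.p ≫ f.f = Q.p ≫ g.f at this
    apply Karoubi.hom_ext_iff.2
    simpa [Karoubi.p_comp, TypeCat.Fun.mk_apply] using this

instance : (kP C).Full where
  map_surjective := by
    intro Q Q' η
    set t : ((kP C).obj Q).obj (op Q.X) := ⟨Q.p, Q.idem⟩ with ht
    have h1 : (η.app (op Q.X) t).1 ≫ Q'.p = (η.app (op Q.X) t).1 := (η.app (op Q.X) t).2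
    have h2 : (η.app (op Q.X) t).1 = Q.p ≫ (η.app (op Q.X) t).1 := by
      simpa using kP_key η (op Q.X) t
    refine ⟨⟨(η.app (op Q.X) t).1, ?_⟩, ?_⟩
    · rw [h1, ← h2]
    · refine NatTrans.ext (funext fun c => ConcreteCategory.hom_ext _ _ fun x => Subtype.ext ?_)
      have := kP_key η c x
      simp only [kP] at this ⊢
      rw [this]; rfl

/-- The inclusion of the presheaf attached to a Karoubi object into the representable. -/
def kIncl (Q : Karoubi C) : (kP C).obj Q ⟶ yoneda.obj Q.X where
  app c := TypeCat.ofHom fun x => x.1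
  naturality c d g := by ext x; rfl

/-- The projection from the representable to the presheaf attached to a Karoubi object. -/
def kProj (Q : Karoubi C) : yoneda.obj Q.X ⟶ (kP C).obj Q where
  app c := TypeCat.ofHom fun g => ⟨g ≫ Q.p, by rw [Category.assoc, Q.idem]⟩
  naturality c d g := by ext x; apply Subtype.ext; exact Category.assoc g.unop x Q.p

lemma kIncl_kProj (Q : Karoubi C) : kIncl Q ≫ kProj Q = 𝟙 _ :=
  NatTrans.ext (funext fun c => ConcreteCategory.hom_ext _ _ fun x => Subtype.ext x.2)

lemma kProj_kIncl (Q : Karoubi C) : kProj Q ≫ kIncl Q = yoneda.map Q.p := rfl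


lemma isIndObject_of_retract {A : Cᵒᵖ ⥤ Type u} {c : C} (s : A ⟶ yoneda.obj c)
    (r : yoneda.obj c ⟶ A) (hsr : s ≫ r = 𝟙 A) : IsIndObject A := by
  let E := CostructuredArrow yoneda A
  let t : E := CostructuredArrow.mk r
  let τ : ∀ u : E, u ⟶ t := fun u =>
    CostructuredArrow.homMk (yoneda.preimage (u.hom ≫ s))
      (by simp [t, Functor.map_preimage, Category.assoc, hsr])
  have hτ : ∀ {u v : E} (f : u ⟶ v), f ≫ τ v = τ u := by
    intro u v f
    apply CostructuredArrow.hom_ext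
    rw [CostructuredArrow.comp_left]
    apply yoneda.map_injective
    simp only [CostructuredArrow.homMk_left, Functor.map_comp, Functor.map_preimage, τ]
    rw [← Category.assoc, CostructuredArrow.w f]
  haveI : IsFilteredOrEmpty E :=
    ⟨fun u v => ⟨t, τ u, τ v, trivial⟩, fun {u v} f g => ⟨t, τ v, by rw [hτ f, hτ g]⟩⟩
  haveI : IsFiltered E := { nonempty := ⟨t⟩ }
  haveI : FinallySmall.{u} E := FinallySmall.mk' (𝟭 E)
  exact isIndObject_of_isFiltered_of_finallySmall A

lemma finite_obj [FinCategory C] {A : Cᵒᵖ ⥤ Type u} (hA : IsIndObject A) (c : Cᵒᵖ) :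
    Finite (A.obj c) := by
  classical
  let P := hA.presentation
  let ev := (evaluation Cᵒᵖ (Type u)).obj c
  have hc : IsColimit (ev.mapCocone P.cocone) := isColimitOfPreserves ev P.coconeIsColimit
  by_contra hinf
  rw [not_finite_iff_infinite] at hinf
  set K := Fintype.card (Σ d : C, (c.unop ⟶ d)) with hK
  let emb : ℕ ↪ A.obj c := Infinite.natEmbedding (A.obj c)
  let e : Fin (K + 1) → A.obj c := fun k => emb k.val
  have he : Function.Injective e := fun k l h => Fin.val_injective (emb.injective h)
  have hsurj : ∀ k : Fin (K + 1), ∃ (j : P.I) (y : ((P.F ⋙ yoneda) ⋙ ev).obj j),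
      (ev.mapCocone P.cocone).ι.app j y = e k := fun k =>
    Types.jointly_surjective _ hc (e k)
  choose j x hx using hsurj
  obtain ⟨S, hS⟩ := IsFiltered.sup_objs_exists (Finset.image j Finset.univ)
  have hf : ∀ k, Nonempty (j k ⟶ S) := fun k => hS (Finset.mem_image_of_mem j (Finset.mem_univ k))
  let f : ∀ k, j k ⟶ S := fun k => (hf k).some
  let y : Fin (K + 1) → (c.unop ⟶ P.F.obj S) := fun k => ((P.F ⋙ yoneda) ⋙ ev).map (f k) (x k)
  have hy : ∀ k, (ev.mapCocone P.cocone).ι.app S (y k) = e k := by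
    intro k
    have := (ev.mapCocone P.cocone).w_apply (f k) (x k)
    simpa [y] using this.trans (hx k)
  have hcard : Fintype.card (c.unop ⟶ P.F.obj S) < K + 1 :=
    Nat.lt_succ_of_le (Fintype.card_le_of_injective
      (fun h => (⟨P.F.obj S, h⟩ : Σ d : C, (c.unop ⟶ d))) sigma_mk_injective)
  obtain ⟨k, l, hkl, hyy⟩ := Fintype.exists_ne_map_eq_of_card_lt y (by simpa using hcard)
  exact hkl (he ((hy k).symm.trans (by rw [hyy, hy l])))

lemma exists_retract [FinCategory C] {A : Cᵒᵖ ⥤ Type u} (hA : IsIndObject A) :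
    ∃ (c : C) (s : A ⟶ yoneda.obj c) (r : yoneda.obj c ⟶ A), s ≫ r = 𝟙 A := by
  classical
  haveI hfin : ∀ c : Cᵒᵖ, Finite (A.obj c) := finite_obj hA
  letI E := CostructuredArrow yoneda A
  haveI : IsFiltered E := hA.isFiltered
  haveI : Finite E := by
    refine Finite.of_injective
      (fun u : E => (⟨u.left, yonedaEquiv u.hom⟩ : Σ d : C, A.obj (op d))) ?_
    rintro ⟨ul, ⟨⟨⟩⟩, uh⟩ ⟨vl, ⟨⟨⟩⟩, vh⟩ h
    obtain ⟨h1, h2⟩ := Sigma.ext_iff.mp h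
    dsimp at h1 h2
    subst h1
    rw [show uh = vh from yonedaEquiv.injective (eq_of_heq h2)]
  haveI : FinCategory E :=
    { fintypeObj := Fintype.ofFinite E
      fintypeHom := fun u v => @Fintype.ofFinite _ (Finite.of_injective
        (fun f : u ⟶ v => f.left)
        (fun f g h => CostructuredArrow.hom_ext _ _ h)) }
  let cone := IsFiltered.cocone (𝟭 E)
  let t := cone.pt
  let s : A ⟶ yoneda.obj t.left :=
    { app := fun c => TypeCat.ofHom fun a => (cone.ι.app (CostructuredArrow.mk (yonedaEquiv.symm a))).left
      naturality := by
        intro c c' g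
        ext a
        let φ : CostructuredArrow.mk (yonedaEquiv.symm (A.map g a)) ⟶
            CostructuredArrow.mk (yonedaEquiv.symm a) :=
          CostructuredArrow.homMk g.unop (by
            simp only [CostructuredArrow.mk_hom_eq_self]
            apply yonedaEquiv.injective
            simp only [yonedaEquiv_comp, Equiv.apply_symm_apply, yonedaEquiv_yoneda_map,
              yonedaEquiv_symm_app_apply, Quiver.Hom.op_unop]
            exact yonedaEquiv_symm_app_apply (F := A) (X := c.unop) a _ g.unop)
        have := congrArg CommaMorphism.left (cone.w φ)
        simp only [Functor.id_map, CostructuredArrow.comp_left, CostructuredArrow.homMk_left,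
          φ] at this
        exact this.symm }
  refine ⟨t.left, s, t.hom, ?_⟩
  ext c a
  have hw := CostructuredArrow.w (cone.ι.app (CostructuredArrow.mk (yonedaEquiv.symm a)))
  have := congrArg yonedaEquiv hw
  rw [yonedaEquiv_comp, yonedaEquiv_yoneda_map] at this
  simpa [s] using this

lemma exists_iso [FinCategory C] {A : Cᵒᵖ ⥤ Type u} (hA : IsIndObject A) :
    ∃ Q : Karoubi C, Nonempty ((kP C).obj Q ≅ A) := by
  obtain ⟨c, s, r, hsr⟩ := exists_retract hA
  have he : yoneda.preimage (r ≫ s) ≫ yoneda.preimage (r ≫ s) = yoneda.preimage (r ≫ s) := by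
    apply yoneda.map_injective
    simp only [Functor.map_comp, Functor.map_preimage]
    rw [Category.assoc, ← Category.assoc s r, hsr, Category.id_comp]
  refine ⟨⟨c, yoneda.preimage (r ≫ s), he⟩, ⟨?_⟩⟩
  set Q : Karoubi C := ⟨c, yoneda.preimage (r ≫ s), he⟩ with hQdef
  have hQ : kProj Q ≫ kIncl Q = r ≫ s := by
    rw [kProj_kIncl]
    exact yoneda.map_preimage _
  refine { hom := kIncl Q ≫ r, inv := s ≫ kProj Q, hom_inv_id := ?_, inv_hom_id := ?_ }
  · calc (kIncl Q ≫ r) ≫ s ≫ kProj Q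
        = kIncl Q ≫ (r ≫ s) ≫ kProj Q := by simp only [Category.assoc]
      _ = kIncl Q ≫ (kProj Q ≫ kIncl Q) ≫ kProj Q := by rw [hQ]
      _ = (kIncl Q ≫ kProj Q) ≫ kIncl Q ≫ kProj Q := by simp only [Category.assoc]
      _ = 𝟙 _ := by rw [kIncl_kProj, Category.id_comp]
  · calc (s ≫ kProj Q) ≫ kIncl Q ≫ r
        = s ≫ (kProj Q ≫ kIncl Q) ≫ r := by simp only [Category.assoc]
      _ = s ≫ (r ≫ s) ≫ r := by rw [hQ]
      _ = (s ≫ r) ≫ s ≫ r := by simp only [Category.assoc]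
      _ = 𝟙 _ := by rw [hsr, Category.id_comp]

end IndKaroubiAux

open IndKaroubiAux

theorem stmt_0 (C : Type u) [SmallCategory C] [FinCategory C] :
    Nonempty (Karoubi C ≌ Ind C) := by
  have hind : ∀ Q : Karoubi C, IsIndObject ((kP C).obj Q) := fun Q =>
    isIndObject_of_retract (kIncl Q) (kProj Q) (kIncl_kProj Q)
  let L : Karoubi C ⥤ ObjectProperty.FullSubcategory (IsIndObject (C := C)) :=
    ObjectProperty.lift _ (kP C) hind
  haveI : L.Faithful := by
    dsimp only [L]; infer_instance
  haveI : L.Full := by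
    dsimp only [L]; infer_instance
  haveI : L.EssSurj := by
    refine ⟨fun Y => ?_⟩
    obtain ⟨Q, ⟨e⟩⟩ := exists_iso Y.2
    exact ⟨Q, ⟨(ObjectProperty.ι _).preimageIso e⟩⟩
  haveI : L.IsEquivalence := {}
  exact ⟨L.asEquivalence.trans (Ind.equivalence C).symm⟩
end

section
/- For a finite category C, a presheaf P : Cᵒᵖ ⥤ Type is an ind-object (i.e. a filtered colimit of representables, Mathlib's `IsIndObject`) if and only if there exists an object c : C such that P is a retract of the representable presheaf yoneda.obj c. -/
open CategoryTheory CategoryTheory.Limits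

universe u

/-- A retract datum: `a` is a retract of `b` via a section `i` and a retraction `r`.
(This matches Mathlib's `CategoryTheory.Retract`.) -/
structure Retract {C : Type*} [Category C] (a b : C) where
  /-- the section -/
  i : a ⟶ b
  /-- the retraction -/
  r : b ⟶ a
  retract : i ≫ r = 𝟙 a

section Aux

open Opposite

variable {C : Type u} [SmallCategory C] [FinCategory C] {P : Cᵒᵖ ⥤ Type u}

omit [FinCategory C] in
theorem isIndObject_of_retract {c : C} (h : _root_.Retract P (yoneda.obj c)) : IsIndObject P := by
  obtain ⟨i, r, hir⟩ := h
  let t : CostructuredArrow yoneda P := CostructuredArrow.mk r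
  let τ : ∀ e : CostructuredArrow yoneda P, e ⟶ t := fun e =>
    CostructuredArrow.homMk (yoneda.preimage (e.hom ≫ i)) (by
      simp [t, Functor.map_preimage, hir])
  have hkey : ∀ (a b : CostructuredArrow yoneda P) (m : a ⟶ b), m ≫ τ b = τ a := by
    intro a b m
    apply CostructuredArrow.hom_ext
    refine yoneda.map_injective ?_
    simp only [CostructuredArrow.comp_left, Functor.map_comp, Functor.map_preimage,
      CostructuredArrow.homMk_left, τ]
    rw [← Category.assoc, CostructuredArrow.w m]
  haveI : IsFilteredOrEmpty (CostructuredArrow yoneda P) :=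
    ⟨fun X Y => ⟨t, τ X, τ Y, trivial⟩,
     fun X Y f g => ⟨t, τ Y, (hkey _ _ f).trans (hkey _ _ g).symm⟩⟩
  haveI : Nonempty (CostructuredArrow yoneda P) := ⟨t⟩
  haveI : IsFiltered (CostructuredArrow yoneda P) := ⟨⟩
  haveI : FinallySmall.{u} (CostructuredArrow yoneda P) :=
    finallySmall_of_small_weakly_terminal_set {t} (fun j => ⟨t, rfl, ⟨τ j⟩⟩)
  exact isIndObject_of_isFiltered_of_finallySmall P

theorem exists_retract_of_isIndObject (h : IsIndObject P) :
    ∃ c : C, Nonempty (_root_.Retract P (yoneda.obj c)) := by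
  classical
  haveI hf : IsFiltered (CostructuredArrow yoneda P) := h.isFiltered
  haveI : Nonempty (CostructuredArrow yoneda P) := IsFiltered.nonempty
  -- the finite set of objects of `C` reachable from `e`
  let R : CostructuredArrow yoneda P → Finset C := fun e =>
    Finset.univ.filter fun d => ∃ e' : CostructuredArrow yoneda P,
      e'.left = d ∧ Nonempty (e ⟶ e')
  have hRmono : ∀ {e e' : CostructuredArrow yoneda P}, (e ⟶ e') → R e' ⊆ R e := by
    intro e e' m d hd
    simp only [R, Finset.mem_filter, Finset.mem_univ, true_and] at hd ⊢
    obtain ⟨e'', h1, ⟨m'⟩⟩ := hd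
    exact ⟨e'', h1, ⟨m ≫ m'⟩⟩
  have hRself : ∀ e, e.left ∈ R e := fun e => by
    simp only [R, Finset.mem_filter, Finset.mem_univ, true_and]
    exact ⟨e, rfl, ⟨𝟙 e⟩⟩
  -- pick e0 with R e0 of minimal cardinality, and c ∈ R e0
  obtain ⟨e0, he0⟩ : ∃ e0 : CostructuredArrow yoneda P,
      (R e0).card = sInf (Set.range fun e => (R e).card) :=
    Nat.sInf_mem (Set.range_nonempty (fun e => (R e).card))
  obtain ⟨c, hc⟩ : ∃ c, c ∈ R e0 := ⟨e0.left, hRself e0⟩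
  -- every object of the costructured arrow category maps to an object over c
  have key : ∀ e : CostructuredArrow yoneda P,
      ∃ f : e.left ⟶ c, ∃ x : P.obj (op c), P.map f.op x = yonedaEquiv e.hom := by
    intro e
    obtain ⟨Z, f, g, -⟩ := IsFilteredOrEmpty.cocone_objs e e0
    have hRZ : R Z = R e0 := Finset.eq_of_subset_of_card_le (hRmono g)
      (he0 ▸ Nat.sInf_le ⟨Z, rfl⟩)
    have hcZ : c ∈ R Z := hRZ ▸ hc
    simp only [R, Finset.mem_filter, Finset.mem_univ, true_and] at hcZ
    obtain ⟨e', he', ⟨m⟩⟩ := hcZ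
    refine ⟨(f ≫ m).left ≫ eqToHom he', P.map (eqToHom he'.symm).op (yonedaEquiv e'.hom), ?_⟩
    have h1 : (((f ≫ m).left ≫ eqToHom he') ≫ eqToHom he'.symm) = (f ≫ m).left := by simp
    rw [← FunctorToTypes.map_comp_apply, ← op_comp, h1, yonedaEquiv_naturality,
      CostructuredArrow.w]
  -- the directed family of "solution sets" and an ultrafilter containing them
  let W : CostructuredArrow yoneda P → Set (P.obj (op c)) := fun e =>
    {x | ∃ f : e.left ⟶ c, P.map f.op x = yonedaEquiv e.hom}
  have hWne : ∀ e, (W e).Nonempty := fun e => by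
    obtain ⟨f, x, hx⟩ := key e; exact ⟨x, f, hx⟩
  have hWmono : ∀ {e e' : CostructuredArrow yoneda P}, (e ⟶ e') → W e' ⊆ W e := by
    intro e e' m x hx
    obtain ⟨f, hf⟩ := hx
    refine ⟨m.left ≫ f, ?_⟩
    rw [op_comp, FunctorToTypes.map_comp_apply, hf]
    erw [yonedaEquiv_naturality]
    rw [CostructuredArrow.w]
  have hdir : Directed (· ≥ ·) fun e => (Filter.principal (W e)) := by
    intro e1 e2
    obtain ⟨Z, f, g, -⟩ := IsFilteredOrEmpty.cocone_objs e1 e2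
    exact ⟨Z, Filter.principal_mono.mpr (hWmono f), Filter.principal_mono.mpr (hWmono g)⟩
  have hNeb : ∀ e, Filter.NeBot (Filter.principal (W e)) := fun e =>
    Filter.principal_neBot_iff.mpr (hWne e)
  haveI : Nonempty (P.obj (op c)) := ⟨(hWne e0).choose⟩
  haveI hLne : Filter.NeBot (⨅ e, Filter.principal (W e)) :=
    Filter.iInf_neBot_of_directed hdir hNeb
  let U : Ultrafilter (P.obj (op c)) := Ultrafilter.of (⨅ e, Filter.principal (W e))
  have hWU : ∀ e, W e ∈ U := fun e =>
    (Ultrafilter.of_le _) (Filter.mem_iInf_of_mem e (Filter.mem_principal_self _))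
  -- the cofiltered system of candidate maps to `c`
  let H : (CostructuredArrow yoneda P)ᵒᵖ ⥤ Type u :=
    { obj := fun e => {f : e.unop.left ⟶ c // {x | P.map f.op x = yonedaEquiv e.unop.hom} ∈ U}
      map := fun {e e'} m => TypeCat.ofHom fun fh => ⟨m.unop.left ≫ fh.val, by
        refine Filter.mem_of_superset fh.2 ?_
        intro x hx
        simp only [Set.mem_setOf_eq] at hx ⊢
        rw [op_comp, FunctorToTypes.map_comp_apply, hx]
        erw [yonedaEquiv_naturality]
        rw [CostructuredArrow.w]⟩
      map_id := by
        intro e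
        ext fh
        simp
      map_comp := by
        intro a b c' f g
        ext fh
        simp }
  haveI : ∀ e : (CostructuredArrow yoneda P)ᵒᵖ, Finite (H.obj e) := fun e =>
    Subtype.finite
  haveI : ∀ e : (CostructuredArrow yoneda P)ᵒᵖ, Nonempty (H.obj e) := by
    intro e
    rw [nonempty_subtype]
    by_contra hno
    push_neg at hno
    have hcompl : ∀ f : e.unop.left ⟶ c,
        {x | P.map f.op x = yonedaEquiv e.unop.hom}ᶜ ∈ U := fun f =>
      (Ultrafilter.compl_mem_iff_notMem).mpr (hno f)
    have hint : (⋂ f : e.unop.left ⟶ c,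
        {x | P.map f.op x = yonedaEquiv e.unop.hom}ᶜ) ∈ U := Filter.iInter_mem.mpr hcompl
    obtain ⟨x, hx1, hx2⟩ := Ultrafilter.nonempty_of_mem (Filter.inter_mem hint (hWU e.unop))
    obtain ⟨f, hf⟩ := hx2
    exact (Set.mem_iInter.mp hx1 f) hf
  obtain ⟨σ, hσ⟩ := nonempty_sections_of_finite_cofiltered_system H
  let s : ∀ e : CostructuredArrow yoneda P, e.left ⟶ c := fun e => (σ (op e)).val
  have hs : ∀ e, {x | P.map (s e).op x = yonedaEquiv e.hom} ∈ U := fun e => (σ (op e)).2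
  have hnat : ∀ {e e' : CostructuredArrow yoneda P} (m : e ⟶ e'), m.left ≫ s e' = s e := by
    intro e e' m
    exact congrArg Subtype.val (hσ (m.op : op e' ⟶ op e))
  -- the pigeonhole argument: the ultrafilter is principal
  let φ : P.obj (op c) → (c ⟶ c) := fun z => s (CostructuredArrow.mk (yonedaEquiv.symm z))
  have hφ : ∀ z, {x | P.map (φ z).op x = z} ∈ U := by
    intro z
    have h1 := hs (CostructuredArrow.mk (yonedaEquiv.symm z))
    simpa using h1
  obtain ⟨w0, hw0⟩ : ∃ w : c ⟶ c, φ ⁻¹' {w} ∈ U := by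
    by_contra hno
    push_neg at hno
    have hint : (⋂ w : c ⟶ c, (φ ⁻¹' {w})ᶜ) ∈ U :=
      Filter.iInter_mem.mpr fun w => (Ultrafilter.compl_mem_iff_notMem).mpr (hno w)
    obtain ⟨x, hx⟩ := Ultrafilter.nonempty_of_mem hint
    exact (Set.mem_iInter.mp hx (φ x)) rfl
  obtain ⟨xstar, hxstar⟩ := Ultrafilter.nonempty_of_mem hw0
  have hsub : ∀ {z}, z ∈ φ ⁻¹' {w0} → z = xstar := by
    intro z hz
    by_contra hne'
    have h1 : {x | P.map w0.op x = z} ∈ U := by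
      have := hφ z; rwa [show φ z = w0 from hz] at this
    have h2 : {x | P.map w0.op x = xstar} ∈ U := by
      have := hφ xstar; rwa [show φ xstar = w0 from hxstar] at this
    obtain ⟨y, hy1, hy2⟩ := Ultrafilter.nonempty_of_mem (Filter.inter_mem h1 h2)
    exact hne' (hy1.symm.trans hy2)
  have hpoint : ∀ S ∈ U, xstar ∈ S := by
    intro S hS
    obtain ⟨y, hy1, hy2⟩ := Ultrafilter.nonempty_of_mem (Filter.inter_mem hS hw0)
    rwa [hsub hy2] at hy1
  have hfinal : ∀ e : CostructuredArrow yoneda P, P.map (s e).op xstar = yonedaEquiv e.hom :=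
    fun e => hpoint _ (hs e)
  -- assemble the retraction
  refine ⟨c, ⟨⟨?_, yonedaEquiv.symm xstar, ?_⟩⟩⟩
  · exact
      { app := fun d => TypeCat.ofHom fun y => s (CostructuredArrow.mk ((yonedaEquiv (X := d.unop) (F := P)).symm y))
        naturality := by
          intro d d' g
          ext y
          have hm : yoneda.map g.unop ≫
              (yonedaEquiv (X := d.unop) (F := P)).symm y =
              (yonedaEquiv (X := d'.unop) (F := P)).symm (P.map g y) :=
            (yonedaEquiv_symm_map g y).symm
          have := hnat (CostructuredArrow.homMk g.unop
            (by simpa using hm) :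
            CostructuredArrow.mk ((yonedaEquiv (X := d'.unop) (F := P)).symm (P.map g y)) ⟶
              CostructuredArrow.mk ((yonedaEquiv (X := d.unop) (F := P)).symm y))
          simpa using this.symm }
  · ext d y
    simpa using hfinal (CostructuredArrow.mk ((yonedaEquiv (X := d.unop) (F := P)).symm y))

end Aux

theorem stmt_1 (C : Type u) [SmallCategory C] [FinCategory C] (P : Cᵒᵖ ⥤ Type u) :
    IsIndObject P ↔ ∃ c : C, Nonempty (_root_.Retract P (yoneda.obj c)) := by
  refine ⟨exists_retract_of_isIndObject, ?_⟩
  rintro ⟨c, ⟨hr⟩⟩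
  exact isIndObject_of_retract hr
end

section
/- Let J be a finite category. The lattice of subobjects of the terminal object of the functor category J ⥤ FintypeCat is order-isomorphic to the lattice (ordered by inclusion) of upward closed sets of objects of J. -/
open CategoryTheory CategoryTheory.Limits

universe u

/-- A set `S` of objects of a category `C` is upward closed if for every morphism
`g : x ⟶ y`, `x ∈ S` implies `y ∈ S`. -/
def UpwardClosed {C : Type*} [Category C] (S : Set C) : Prop :=
  ∀ {x y : C}, (x ⟶ y) → x ∈ S → y ∈ S

namespace Stmt2Aux

open scoped Classical

variable (J : Type u) [SmallCategory J] [FinCategory J]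

/-- The functor associated to an upward closed set. -/
noncomputable def setF (S : Set J) (hS : UpwardClosed S) : J ⥤ FintypeCat.{u} where
  obj j := FintypeCat.of (ULift (PLift (j ∈ S)))
  map g := FintypeCat.homMk fun (h : ULift (PLift (_ ∈ S))) => (⟨⟨hS g h.down.down⟩⟩ : ULift (PLift (_ ∈ S)))
  map_id _ := FintypeCat.hom_ext _ _ fun _ => Subsingleton.elim (α := ULift (PLift _)) _ _
  map_comp _ _ := FintypeCat.hom_ext _ _ fun _ => Subsingleton.elim (α := ULift (PLift _)) _ _

instance (S : Set J) (hS : UpwardClosed S) (j : J) :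
    Subsingleton ((setF J S hS).obj j) :=
  inferInstanceAs (Subsingleton (ULift (PLift (j ∈ S))))

/-- The corepresentable functor landing in FintypeCat. -/
noncomputable def homF (j : J) : J ⥤ FintypeCat.{u} where
  obj k := FintypeCat.of (j ⟶ k)
  map g := FintypeCat.homMk fun h => h ≫ g
  map_id k := by ext h; exact Category.comp_id h
  map_comp g g' := by ext h; exact (Category.assoc h g g').symm

lemma subsingleton_obj (X : Subobject (⊤_ (J ⥤ FintypeCat.{u}))) (j : J) :
    Subsingleton ((X : J ⥤ FintypeCat.{u}).obj j) := by
  constructor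
  intro a b
  let α : (x : (X : J ⥤ FintypeCat.{u}).obj j) → (homF J j ⟶ (X : J ⥤ FintypeCat.{u})) :=
    fun x =>
    { app := fun k => FintypeCat.homMk fun g => (X : J ⥤ FintypeCat.{u}).map g x
      naturality := fun k l g => by
        ext h
        exact ConcreteCategory.congr_hom ((X : J ⥤ FintypeCat.{u}).map_comp h g) x }
  have h1 : α a ≫ X.arrow = α b ≫ X.arrow := terminal.hom_ext _ _
  have h2 : α a = α b := (cancel_mono X.arrow).mp h1
  have := ConcreteCategory.congr_hom (congr_app h2 j) (𝟙 j)
  have h3 : (X : J ⥤ FintypeCat.{u}).map (𝟙 j) a = (X : J ⥤ FintypeCat.{u}).map (𝟙 j) b := this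
  simpa using h3

lemma mono_from (S : Set J) (hS : UpwardClosed S) :
    Mono (terminal.from (setF J S hS)) := by
  constructor
  intro Z g h _
  ext k x
  exact Subsingleton.elim _ _

/-- forward map -/
noncomputable def fwd (X : Subobject (⊤_ (J ⥤ FintypeCat.{u}))) : {S : Set J // UpwardClosed S} :=
  ⟨{j | Nonempty ((X : J ⥤ FintypeCat.{u}).obj j)},
   fun {x y} g hx => hx.elim fun a => ⟨(X : J ⥤ FintypeCat.{u}).map g a⟩⟩

/-- backward map -/
noncomputable def bwd (S : {S : Set J // UpwardClosed S}) : Subobject (⊤_ (J ⥤ FintypeCat.{u})) :=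
  haveI := mono_from J S.1 S.2
  Subobject.mk (terminal.from (setF J S.1 S.2))

lemma left_inv (X : Subobject (⊤_ (J ⥤ FintypeCat.{u}))) : bwd J (fwd J X) = X := by
  haveI := mono_from J (fwd J X).1 (fwd J X).2
  have : ∀ j, Subsingleton ((X : J ⥤ FintypeCat.{u}).obj j) := subsingleton_obj J X
  let e : ∀ j : J, (setF J (fwd J X).1 (fwd J X).2).obj j ≅ (X : J ⥤ FintypeCat.{u}).obj j :=
    fun j => FintypeCat.equivEquivIso
      { toFun := fun (h : ULift (PLift (j ∈ (fwd J X).1))) => h.down.down.some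
        invFun := fun a => (⟨⟨⟨a⟩⟩⟩ : ULift (PLift (j ∈ (fwd J X).1)))
        left_inv := fun h => Subsingleton.elim _ _
        right_inv := fun a => (this j).elim _ _ }
  let i : setF J (fwd J X).1 (fwd J X).2 ≅ (X : J ⥤ FintypeCat.{u}) :=
    NatIso.ofComponents e (fun {k l} g => by
      ext x
      exact (this l).elim _ _)
  conv_rhs => rw [← Subobject.mk_arrow X]
  rw [bwd]
  exact Subobject.mk_eq_mk_of_comm _ _ i (terminal.hom_ext _ _)

lemma right_inv (S : {S : Set J // UpwardClosed S}) : fwd J (bwd J S) = S := by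
  haveI := mono_from J S.1 S.2
  ext j
  constructor
  · rintro ⟨a⟩
    have b := (Subobject.underlyingIso (terminal.from (setF J S.1 S.2))).hom.app j a
    exact (show ULift (PLift (j ∈ S.1)) from b).down.down
  · intro hj
    refine ⟨(Subobject.underlyingIso (terminal.from (setF J S.1 S.2))).inv.app j ?_⟩
    exact (show ULift (PLift (j ∈ S.1)) from ⟨⟨hj⟩⟩)

lemma fwd_mono : Monotone (fwd J) := by
  intro X Y h j hj
  exact hj.elim fun a => ⟨(Subobject.ofLE X Y h).app j a⟩

lemma bwd_mono : Monotone (bwd J) := by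
  intro S T h
  haveI := mono_from J S.1 S.2
  haveI := mono_from J T.1 T.2
  refine Subobject.mk_le_mk_of_comm ?_ (terminal.hom_ext _ _)
  exact
    { app := fun j => FintypeCat.homMk fun (x : ULift (PLift (j ∈ S.1))) => (⟨⟨h x.down.down⟩⟩ : ULift (PLift (j ∈ T.1)))
      naturality := fun k l g => by
        ext x; exact Subsingleton.elim (α := ULift (PLift _)) _ _ }

end Stmt2Aux

theorem stmt_2 (J : Type u) [SmallCategory J] [FinCategory J] :
    Nonempty (Subobject (⊤_ (J ⥤ FintypeCat.{u})) ≃o {S : Set J // UpwardClosed S}) := by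
  exact ⟨Equiv.toOrderIso
    ⟨Stmt2Aux.fwd J, Stmt2Aux.bwd J, Stmt2Aux.left_inv J, Stmt2Aux.right_inv J⟩
    (Stmt2Aux.fwd_mono J) (Stmt2Aux.bwd_mono J)⟩
end

section
/- Let J be a finite category and X : J ⥤ FintypeCat. The lattice of subobjects of X in the functor category J ⥤ FintypeCat is order-isomorphic to the lattice (ordered by inclusion) of upward closed sets of objects of the category of elements of X. -/
open CategoryTheory CategoryTheory.Limits

universe u

namespace Stmt3Aux

set_option linter.unusedSectionVars false

attribute [local instance] Classical.propDecidable

variable {J : Type u} [SmallCategory J] [FinCategory J] (X : J ⥤ FintypeCat.{u})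

lemma hom_apply_eq {A B : FintypeCat.{u}} {f g : A ⟶ B} (h : f = g) (x : A) : f x = g x := by
  rw [h]

lemma natTrans_eq_apply {F G : J ⥤ FintypeCat.{u}} {α β : F ⟶ G} (h : α = β) (j : J)
    (x : F.obj j) : α.app j x = β.app j x := by rw [h]

lemma naturality_apply {F G : J ⥤ FintypeCat.{u}} (α : F ⟶ G) {j j' : J} (f : j ⟶ j')
    (x : F.obj j) : α.app j' (F.map f x) = G.map f (α.app j x) :=
  hom_apply_eq (α.naturality f) x

/-- The set of elements hit by a subobject. -/
def toSet (P : Subobject X) : Set (X ⋙ FintypeCat.incl).Elements :=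
  {p | p.2 ∈ Set.range (P.arrow.app p.1)}

lemma toSet_upwardClosed (P : Subobject X) : UpwardClosed (toSet X P) := by
  rintro p q f ⟨a, ha⟩
  refine ⟨(P : J ⥤ FintypeCat.{u}).map f.1 a, ?_⟩
  calc (P.arrow.app q.1) ((P : J ⥤ FintypeCat.{u}).map f.1 a)
      = X.map f.1 (P.arrow.app p.1 a) := naturality_apply P.arrow f.1 a
    _ = q.2 := by rw [ha]; exact f.2

lemma arrow_app_injective (P : Subobject X) (j : J) :
    Function.Injective (P.arrow.app j) := by
  have : Mono (P.arrow.app j) := inferInstance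
  exact (ConcreteCategory.mono_iff_injective_of_preservesPullback (P.arrow.app j)).mp this

lemma toSet_monotone : Monotone (toSet X) := by
  intro P Q h p hp
  obtain ⟨a, ha⟩ := hp
  refine ⟨(Subobject.ofLE P Q h).app p.1 a, ?_⟩
  have := natTrans_eq_apply (Subobject.ofLE_arrow h) p.1 a
  exact this.trans ha

/-- The subfunctor associated to an upward closed set. -/
@[reducible] noncomputable def sub (S : Set (X ⋙ FintypeCat.incl).Elements) (hS : UpwardClosed S) : J ⥤ FintypeCat.{u} where
  obj j := FintypeCat.of {a : X.obj j // (⟨j, a⟩ : (X ⋙ FintypeCat.incl).Elements) ∈ S}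
  map {j j'} f := FintypeCat.homMk fun (a : {a : X.obj j // (⟨j, a⟩ : (X ⋙ FintypeCat.incl).Elements) ∈ S}) => ⟨X.map f a.1,
    hS (x := ⟨j, a.1⟩) (y := ⟨j', X.map f a.1⟩) ⟨f, rfl⟩ a.2⟩
  map_id j := by
    ext a
    exact hom_apply_eq (X.map_id j) a.1
  map_comp {j j' j''} f g := by
    ext a
    exact hom_apply_eq (X.map_comp f g) a.1

/-- The inclusion of the subfunctor. -/
noncomputable def ι (S : Set (X ⋙ FintypeCat.incl).Elements) (hS : UpwardClosed S) : sub X S hS ⟶ X where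
  app j := FintypeCat.homMk (Subtype.val : {a : X.obj j // (⟨j, a⟩ : (X ⋙ FintypeCat.incl).Elements) ∈ S} → X.obj j)
  naturality _ _ _ := rfl

instance (S : Set (X ⋙ FintypeCat.incl).Elements) (hS : UpwardClosed S) : Mono (ι X S hS) := by
  have : ∀ k, Mono ((ι X S hS).app k) := fun k =>
    ConcreteCategory.mono_of_injective _ (fun _ _ h => Subtype.val_injective h)
  exact NatTrans.mono_of_mono_app _

/-- The subobject associated to an upward closed set. -/
noncomputable def fromSet (S : Set (X ⋙ FintypeCat.incl).Elements) (hS : UpwardClosed S) :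
    Subobject X :=
  Subobject.mk (ι X S hS)

lemma le_of_toSet_subset {P Q : Subobject X} (h : toSet X P ⊆ toSet X Q) : P ≤ Q := by
  have hmem : ∀ (j : J) (a : (P : J ⥤ FintypeCat.{u}).obj j),
      ∃ b, Q.arrow.app j b = P.arrow.app j a := fun j a =>
    h (show (⟨j, P.arrow.app j a⟩ : (X ⋙ FintypeCat.incl).Elements) ∈ toSet X P from ⟨a, rfl⟩)
  refine Subobject.le_of_comm
    { app := fun j => FintypeCat.homMk fun a => Classical.choose (hmem j a)
      naturality := ?_ } ?_
  · intro j j' f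
    ext a
    apply arrow_app_injective X Q j'
    show Q.arrow.app j' (Classical.choose (hmem j' ((P : J ⥤ FintypeCat.{u}).map f a)))
      = Q.arrow.app j' ((Q : J ⥤ FintypeCat.{u}).map f (Classical.choose (hmem j a)))
    rw [Classical.choose_spec (hmem j' ((P : J ⥤ FintypeCat.{u}).map f a)),
      naturality_apply Q.arrow f (Classical.choose (hmem j a)),
      Classical.choose_spec (hmem j a), naturality_apply P.arrow f a]
  · apply NatTrans.ext
    funext j
    ext a
    exact Classical.choose_spec (hmem j a)

lemma toSet_fromSet (S : Set (X ⋙ FintypeCat.incl).Elements) (hS : UpwardClosed S) :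
    toSet X (fromSet X S hS) = S := by
  ext p
  obtain ⟨j, a⟩ := p
  set e := Subobject.underlyingIso (ι X S hS) with he
  constructor
  · rintro ⟨b, hb⟩
    have hinv : e.inv.app j (e.hom.app j b) = b :=
      hom_apply_eq (e.hom_inv_id_app j) b
    have harr : (fromSet X S hS).arrow.app j (e.inv.app j (e.hom.app j b))
        = (ι X S hS).app j (e.hom.app j b) :=
      natTrans_eq_apply (Subobject.underlyingIso_arrow (ι X S hS)) j (e.hom.app j b)
    rw [hinv] at harr
    have heq : a = (e.hom.app j b).1 := hb.symm.trans harr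
    have hmem := (e.hom.app j b).2
    rwa [show (⟨j, (e.hom.app j b).1⟩ : (X ⋙ FintypeCat.incl).Elements) = ⟨j, a⟩ from
      congrArg (Sigma.mk j) heq.symm] at hmem
  · intro ha
    refine ⟨e.inv.app j (⟨a, ha⟩ : (sub X S hS).obj j), ?_⟩
    exact natTrans_eq_apply (Subobject.underlyingIso_arrow (ι X S hS)) j
      (⟨a, ha⟩ : (sub X S hS).obj j)

lemma fromSet_toSet (P : Subobject X) : fromSet X (toSet X P) (toSet_upwardClosed X P) = P := by
  apply le_antisymm
  · -- mk ι ≤ P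
    have hmem : ∀ (j : J) (a : (sub X (toSet X P) (toSet_upwardClosed X P)).obj j),
        ∃ b, P.arrow.app j b = a.1 := fun j a => a.2
    refine Subobject.mk_le_of_comm
      { app := fun j => FintypeCat.homMk fun a => Classical.choose (hmem j a)
        naturality := ?_ } ?_
    · intro j j' f
      ext a
      apply arrow_app_injective X P j'
      show P.arrow.app j' (Classical.choose (hmem j'
          ((sub X (toSet X P) (toSet_upwardClosed X P)).map f a)))
        = P.arrow.app j' ((P : J ⥤ FintypeCat.{u}).map f (Classical.choose (hmem j a)))
      rw [Classical.choose_spec (hmem j' ((sub X (toSet X P) (toSet_upwardClosed X P)).map f a)),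
        naturality_apply P.arrow f (Classical.choose (hmem j a)),
        Classical.choose_spec (hmem j a)]
      rfl
    · apply NatTrans.ext
      funext j
      ext a
      exact Classical.choose_spec (hmem j a)
  · -- P ≤ mk ι
    refine Subobject.le_mk_of_comm
      { app := fun j => FintypeCat.homMk fun a => (⟨P.arrow.app j a, ⟨a, rfl⟩⟩ :
          (sub X (toSet X P) (toSet_upwardClosed X P)).obj j)
        naturality := ?_ } ?_
    · intro j j' f
      ext a
      exact naturality_apply P.arrow f a
    · apply NatTrans.ext
      funext j
      ext a
      rfl

end Stmt3Aux

theorem stmt_3 (J : Type u) [SmallCategory J] [FinCategory J] (X : J ⥤ FintypeCat.{u}) :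
    Nonempty (Subobject X ≃o {S : Set (X ⋙ FintypeCat.incl).Elements // UpwardClosed S}) := by
  refine ⟨{
    toFun := fun P => ⟨Stmt3Aux.toSet X P, Stmt3Aux.toSet_upwardClosed X P⟩
    invFun := fun S => Stmt3Aux.fromSet X S.1 S.2
    left_inv := fun P => Stmt3Aux.fromSet_toSet X P
    right_inv := fun S => Subtype.ext (Stmt3Aux.toSet_fromSet X S.1 S.2)
    map_rel_iff' := ?_ }⟩
  intro P Q
  constructor
  · intro h
    exact Stmt3Aux.le_of_toSet_subset X h
  · intro h
    exact Stmt3Aux.toSet_monotone X h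
end

section
/- Let I and J be finite categories. Any functor F : (J ⥤ FintypeCat) ⥤ (I ⥤ FintypeCat) that preserves finite colimits has a right adjoint (F is a left adjoint). -/
open CategoryTheory CategoryTheory.Limits

universe u

namespace Stmt5Aux

noncomputable instance finiteHomFintypeCat (X Y : FintypeCat.{u}) : Finite (X ⟶ Y) := by
  infer_instance

noncomputable instance natTransFintype {K : Type u} [SmallCategory K] [FinCategory K]
    (B A : K ⥤ FintypeCat.{u}) : Fintype (B ⟶ A) := by
  have : Finite (B ⟶ A) := by
    refine Finite.of_injective (fun f => (fun k => f.app k)) ?_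
    intro f g h
    ext k : 2
    exact congrFun h k
  exact Fintype.ofFinite _

variable {J : Type u} [SmallCategory J] [FinCategory J]

/-- The corepresentable functor `j' ↦ (j ⟶ j')` into `FintypeCat`. -/
def coyo (j : J) : J ⥤ FintypeCat.{u} where
  obj j' := FintypeCat.of (j ⟶ j')
  map g := FintypeCat.homMk fun h => h ≫ g
  map_id _ := by ext h; exact Category.comp_id _
  map_comp _ _ := by ext h; exact (Category.assoc _ _ _).symm

/-- Precomposition `coyo j' ⟶ coyo j` induced by `u : j ⟶ j'`. -/
def coyoPre {j j' : J} (u : j ⟶ j') : coyo j' ⟶ coyo j where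
  app j'' := FintypeCat.homMk fun h => u ≫ h
  naturality j'' j''' g := by ext h; exact (Category.assoc _ _ _).symm

@[simp] lemma coyoPre_app {j j' : J} (u : j ⟶ j') (j'' : J) (h : j' ⟶ j'') :
    (coyoPre u).app j'' h = u ≫ h := rfl

lemma coyoPre_id (j : J) : coyoPre (𝟙 j) = 𝟙 (coyo j) := by
  ext j'' h
  exact Category.id_comp _

lemma coyoPre_comp {j j' j'' : J} (u : j ⟶ j') (v : j' ⟶ j'') :
    coyoPre (u ≫ v) = coyoPre v ≫ coyoPre u := by
  ext k h
  exact Category.assoc _ _ _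

variable (X : J ⥤ FintypeCat.{u})

/-- The category of elements of `X`. -/
abbrev El : Type u := (X ⋙ FintypeCat.incl).Elements

noncomputable instance : FinCategory (El X) where
  fintypeObj := by
    have : Finite (El X) := by
      have : ∀ j : J, Finite ((X ⋙ FintypeCat.incl).obj j) := fun j => by
        show Finite (X.obj j); infer_instance
      show Finite (Σ j : J, (X ⋙ FintypeCat.incl).obj j)
      infer_instance
    exact Fintype.ofFinite _
  fintypeHom a b := by
    have : Finite (a ⟶ b) := by
      refine Finite.of_injective (fun f => f.val) ?_
      intro f g h
      exact Subtype.ext h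
    exact Fintype.ofFinite _

/-- The canonical diagram of corepresentables over the (opposite) category of elements. -/
def elDiagram : (El X)ᵒᵖ ⥤ (J ⥤ FintypeCat.{u}) where
  obj e := coyo e.unop.1
  map f := coyoPre f.unop.val
  map_id e := coyoPre_id _
  map_comp f g := by
    show coyoPre (g.unop.val ≫ f.unop.val) = _
    rw [coyoPre_comp]

/-- The canonical cocone on `elDiagram X` with apex `X`. -/
def elCocone : Cocone (elDiagram X) where
  pt := X
  ι :=
    { app := fun e =>
        { app := fun j'' => FintypeCat.homMk fun h => X.map h e.unop.2
          naturality := fun j'' j''' g => by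
            ext h
            show X.map (h ≫ g) e.unop.2 = X.map g (X.map h e.unop.2)
            exact ConcreteCategory.congr_hom (X.map_comp h g) _ }
      naturality := fun a b f => by
        ext j'' h
        show X.map (f.unop.val ≫ h) b.unop.2 = X.map h a.unop.2
        refine (ConcreteCategory.congr_hom (X.map_comp f.unop.val h) _).trans ?_
        exact congrArg (X.map h) f.unop.2 }

@[simp] lemma elCocone_ι_app_app (e : (El X)ᵒᵖ) (j'' : J) (h : e.unop.1 ⟶ j'') :
    ((elCocone X).ι.app e).app j'' h = X.map h e.unop.2 := rfl

variable {X}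

lemma cocone_w (s : Cocone (elDiagram X)) {j j' : J} (g : j ⟶ j') (x : X.obj j) :
    coyoPre g ≫ s.ι.app (Opposite.op ⟨j, x⟩) = s.ι.app (Opposite.op ⟨j', X.map g x⟩) := by
  let φ : (X ⋙ FintypeCat.incl).elementsMk j x ⟶
      (X ⋙ FintypeCat.incl).elementsMk j' (X.map g x) := ⟨g, rfl⟩
  have h1 := s.ι.naturality φ.op
  exact h1.trans (Category.comp_id _)

variable (X)

/-- The canonical cocone is a colimit (co-Yoneda). -/
noncomputable def elColimit : IsColimit (elCocone X) where
  desc s :=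
    { app := fun j => FintypeCat.homMk fun x => (s.ι.app (Opposite.op ⟨j, x⟩)).app j (𝟙 j)
      naturality := fun j j' g => by
        ext x
        show (s.ι.app (Opposite.op ⟨j', X.map g x⟩)).app j' (𝟙 j')
            = s.pt.map g ((s.ι.app (Opposite.op ⟨j, x⟩)).app j (𝟙 j))
        rw [← cocone_w s g x]
        have h2 := ConcreteCategory.congr_hom ((s.ι.app (Opposite.op ⟨j, x⟩)).naturality g) (𝟙 j)
        show (s.ι.app (Opposite.op ⟨j, x⟩)).app j' ((coyoPre g).app j' (𝟙 j')) = _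
        have : (coyoPre g).app j' (𝟙 j') = (coyo j).map g (𝟙 j) := by
          show g ≫ 𝟙 j' = 𝟙 j ≫ g; simp
        rw [this]
        exact h2 }
  fac s e := by
    ext j'' h
    show (s.ι.app (Opposite.op ⟨j'', X.map h e.unop.2⟩)).app j'' (𝟙 j'')
        = (s.ι.app e).app j'' h
    rw [← cocone_w s h e.unop.2]
    show (s.ι.app (Opposite.op ⟨e.unop.1, e.unop.2⟩)).app j'' (h ≫ 𝟙 j'') = _
    refine (congrArg _ (Category.comp_id h)).trans ?_
    rfl
  uniq s m hm := by
    ext j x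
    have := ConcreteCategory.congr_hom (congrArg (fun t => NatTrans.app t j) (hm (Opposite.op ⟨j, x⟩))) (𝟙 j)
    show m.app j x = _
    simp only [FintypeCat.comp_apply] at this ⊢
    erw [← this]
    show m.app j x = m.app j (X.map (𝟙 j) x)
    rw [X.map_id]
    rfl

end Stmt5Aux

open Stmt5Aux in
theorem stmt_5 (J I : Type u) [SmallCategory J] [FinCategory J] [SmallCategory I]
    [FinCategory I] (F : (J ⥤ FintypeCat.{u}) ⥤ (I ⥤ FintypeCat.{u}))
    [PreservesFiniteColimits F] : F.IsLeftAdjoint := by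
  -- the candidate right adjoint on objects
  let R : (I ⥤ FintypeCat.{u}) → (J ⥤ FintypeCat.{u}) := fun A =>
    { obj := fun j => FintypeCat.of (F.obj (coyo j) ⟶ A)
      map := fun {j j'} g => FintypeCat.homMk fun φ => F.map (coyoPre g) ≫ φ
      map_id := fun j => by
        refine FintypeCat.hom_ext _ _ fun φ => ?_
        show F.map (coyoPre (𝟙 j)) ≫ φ = φ
        rw [coyoPre_id, F.map_id, Category.id_comp]
      map_comp := fun {j j' j''} g g' => by
        refine FintypeCat.hom_ext _ _ fun φ => ?_
        show F.map (coyoPre (g ≫ g')) ≫ φ = F.map (coyoPre g') ≫ F.map (coyoPre g) ≫ φ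
        rw [coyoPre_comp, F.map_comp, Category.assoc] }
  -- the hom-set bijection
  let e : ∀ (X : J ⥤ FintypeCat.{u}) (A : I ⥤ FintypeCat.{u}),
      (F.obj X ⟶ A) ≃ (X ⟶ R A) := fun X A =>
    { toFun := fun φ =>
        { app := fun j => FintypeCat.homMk fun x => F.map ((elCocone X).ι.app (Opposite.op ⟨j, x⟩)) ≫ φ
          naturality := fun j j' g => by
            refine FintypeCat.hom_ext _ _ fun x => ?_
            show F.map ((elCocone X).ι.app (Opposite.op ⟨j', X.map g x⟩)) ≫ φ
                = F.map (coyoPre g) ≫ F.map ((elCocone X).ι.app (Opposite.op ⟨j, x⟩)) ≫ φ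
            erw [← Category.assoc, ← F.map_comp, cocone_w (elCocone X) g x]; rfl }
      invFun := fun u =>
        (isColimitOfPreserves F (elColimit X)).desc
          ⟨A,
            { app := fun e' => u.app e'.unop.1 e'.unop.2
              naturality := fun a b f => by
                have hnat := ConcreteCategory.congr_hom (u.naturality f.unop.val) b.unop.2
                show F.map (coyoPre f.unop.val) ≫ u.app b.unop.1 b.unop.2
                    = u.app a.unop.1 a.unop.2 ≫ 𝟙 A
                rw [Category.comp_id]
                have hb := f.unop.2
                calc F.map (coyoPre f.unop.val) ≫ u.app b.unop.1 b.unop.2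
                    = u.app a.unop.1 (X.map f.unop.val b.unop.2) := hnat.symm
                  _ = u.app a.unop.1 a.unop.2 := by rw [show X.map f.unop.val b.unop.2
                        = a.unop.2 from hb] }⟩
      left_inv := fun φ => by
        apply (isColimitOfPreserves F (elColimit X)).hom_ext
        intro e'
        rw [(isColimitOfPreserves F (elColimit X)).fac]
        rfl
      right_inv := fun u =>
        NatTrans.ext (funext fun j => FintypeCat.hom_ext _ _ fun x =>
          (isColimitOfPreserves F (elColimit X)).fac _ (Opposite.op ⟨j, x⟩)) }
  have he : ∀ (X' X : J ⥤ FintypeCat.{u}) (A : I ⥤ FintypeCat.{u}) (f : X' ⟶ X)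
      (g : F.obj X ⟶ A), e X' A (F.map f ≫ g) = f ≫ e X A g := by
    intro X' X A f g
    refine NatTrans.ext (funext fun j => FintypeCat.hom_ext _ _ fun x => ?_)
    show F.map ((elCocone X').ι.app (Opposite.op ⟨j, x⟩)) ≫ F.map f ≫ g
        = F.map ((elCocone X).ι.app (Opposite.op ⟨j, f.app j x⟩)) ≫ g
    erw [← Category.assoc, ← F.map_comp]
    congr 2
    ext j'' h
    show f.app j'' (X'.map h x) = X.map h (f.app j x)
    exact ConcreteCategory.congr_hom (f.naturality h) x
  exact ⟨Adjunction.rightAdjointOfEquiv e he, ⟨Adjunction.adjunctionOfEquivRight e he⟩⟩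
end

section
/- Let P be a finite partial order, regarded as a topological space whose open sets are exactly the upper sets of P (the upper-set / Alexandrov topology). Then the category of sheaves of types on this topological space is equivalent to the functor category P ⥤ Type, where P is regarded as a (thin) category via its order. -/
open CategoryTheory CategoryTheory.Limits

universe u

theorem stmt_7 (P : Type u) [Fintype P] [PartialOrder P] :
    letI : TopologicalSpace P := Topology.upperSet P
    Nonempty (TopCat.Sheaf (Type u) (TopCat.of P) ≌ (P ⥤ Type u)) := by
  letI : TopologicalSpace P := Topology.upperSet P
  -- The functor sending `x : Pᵒᵖ` to the principal upper set on `x`.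
  let G : Pᵒᵖ ⥤ TopologicalSpace.Opens P :=
    { obj := fun x => ⟨Set.Ici x.unop, isUpperSet_Ici x.unop⟩
      map := fun {x y} f =>
        homOfLE (fun a (ha : x.unop ≤ a) => le_trans f.unop.le ha) }
  let K := Opens.grothendieckTopology P
  haveI : G.Full :=
    ⟨fun {x y} f => ⟨(homOfLE (f.le (le_refl x.unop))).op, Subsingleton.elim _ _⟩⟩
  haveI : G.Faithful := ⟨fun _ => Subsingleton.elim _ _⟩
  haveI : G.IsCoverDense K := by
    constructor
    intro U x hx
    have hU : IsUpperSet (U : Set P) := U.isOpen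
    refine ⟨G.obj (Opposite.op x), homOfLE (fun b hb => hU hb hx), ?_, le_refl x⟩
    exact ⟨⟨Opposite.op x, 𝟙 _, homOfLE (fun b hb => hU hb hx), by simp⟩⟩
  -- The induced topology on `Pᵒᵖ` is the trivial one.
  have hbot : G.inducedTopology K = ⊥ := by
    ext x S
    rw [GrothendieckTopology.bot_covering]
    constructor
    · intro hS
      rw [Functor.mem_inducedTopology_iff_of_isCoverDense] at hS
      obtain ⟨V, f, hf, hxV⟩ := hS x.unop (le_refl x.unop)
      obtain ⟨y, g, lift, hg, rfl⟩ := hf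
      have h1 : y.unop ≤ x.unop := lift.le hxV
      have h2 : x.unop ≤ y.unop := g.unop.le
      have hyx : y = x := Opposite.unop_injective (le_antisymm h1 h2)
      subst hyx
      rw [← Sieve.id_mem_iff_eq_top]
      have : g = 𝟙 y := Subsingleton.elim _ _
      rwa [this] at hg
    · rintro rfl
      rw [Functor.mem_inducedTopology_iff_of_isCoverDense]
      rw [Sieve.functorPushforward_top]
      exact K.top_mem _
  let e1 : Sheaf (G.inducedTopology K) (Type u) ≌ Sheaf K (Type u) :=
    G.sheafInducedTopologyEquivOfIsCoverDense K (Type u)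
  rw [hbot] at e1
  let e2 : Sheaf (⊥ : GrothendieckTopology Pᵒᵖ) (Type u) ≌ (Pᵒᵖᵒᵖ ⥤ Type u) :=
    sheafBotEquivalence (Type u)
  let e3 : (Pᵒᵖᵒᵖ ⥤ Type u) ≌ (P ⥤ Type u) :=
    Equivalence.congrLeft (opOpEquivalence P)
  exact ⟨e1.symm.trans (e2.trans e3)⟩
end

section
/- Let I and J be finite idempotent-complete categories and A : I ⥤ J a functor. The precomposition functor (whiskeringLeft).obj A : (J ⥤ Type) ⥤ (I ⥤ Type) is faithful if and only if every object a of J is a retract of A.obj x for some object x of I. -/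
open CategoryTheory

universe u

namespace Stmt8Aux

variable {I J : Type u} [SmallCategory I] [SmallCategory J] (A : I ⥤ J) (a : J)

/-- `f : a ⟶ b` factors through some object in the image of `A`. -/
def Fact {b : J} (f : a ⟶ b) : Prop :=
  ∃ (x : I) (i : a ⟶ A.obj x) (r : A.obj x ⟶ b), i ≫ r = f

lemma Fact.comp {b b' : J} {f : a ⟶ b} (h : Fact A a f) (g : b ⟶ b') :
    Fact A a (f ≫ g) := by
  obtain ⟨x, i, r, hi⟩ := h
  exact ⟨x, i, r ≫ g, by rw [← hi]; simp⟩

/-- The relation identifying the two copies of `a ⟶ b` along factoring morphisms. -/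
def R (b : J) (p q : (a ⟶ b) ⊕ (a ⟶ b)) : Prop :=
  ∃ f, Fact A a f ∧ p = Sum.inl f ∧ q = Sum.inr f

/-- The pushout of two copies of `coyoneda.obj a` along the subfunctor of factoring maps. -/
def P : J ⥤ Type u where
  obj b := Quot (R A a b)
  map {b b'} g := TypeCat.ofHom (Quot.map (ra := R A a b) (rb := R A a b')
    (Sum.map (· ≫ g) (· ≫ g)) (by
    rintro _ _ ⟨f, hf, rfl, rfl⟩
    exact ⟨f ≫ g, hf.comp A a g, rfl, rfl⟩))
  map_id b := by
    ext p
    induction p using Quot.ind with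
    | _ p => rcases p with f | f <;> simp [Quot.map]
  map_comp {b b' b''} g g' := by
    ext p
    induction p using Quot.ind with
    | _ p => rcases p with f | f <;> simp [Quot.map]

/-- The first coprojection. -/
def κ₁ : coyoneda.obj (Opposite.op a) ⟶ P A a where
  app b := TypeCat.ofHom fun f => Quot.mk _ (Sum.inl f)
  naturality b b' g := by ext; rfl

/-- The second coprojection. -/
def κ₂ : coyoneda.obj (Opposite.op a) ⟶ P A a where
  app b := TypeCat.ofHom fun f => Quot.mk _ (Sum.inr f)
  naturality b b' g := by ext; rfl

end Stmt8Aux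

open Stmt8Aux in
theorem stmt_8 (I J : Type u) [SmallCategory I] [FinCategory I] [IsIdempotentComplete I]
    [SmallCategory J] [FinCategory J] [IsIdempotentComplete J] (A : I ⥤ J) :
    ((Functor.whiskeringLeft I J (Type u)).obj A).Faithful ↔
      ∀ a : J, ∃ x : I, Nonempty (_root_.Retract a (A.obj x)) := by
  constructor
  · intro hF a
    have hwhisk : ((Functor.whiskeringLeft I J (Type u)).obj A).map (κ₁ A a)
        = ((Functor.whiskeringLeft I J (Type u)).obj A).map (κ₂ A a) := by
      apply NatTrans.ext
      funext x; ext f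
      show Quot.mk (R A a (A.obj x)) (Sum.inl f) = Quot.mk _ (Sum.inr f)
      exact Quot.sound ⟨f, ⟨x, f, 𝟙 _, Category.comp_id f⟩, rfl, rfl⟩
    have hκ : κ₁ A a = κ₂ A a := hF.map_injective hwhisk
    -- evaluate at the identity of `a`
    have happ : (κ₁ A a).app a (𝟙 a) = (κ₂ A a).app a (𝟙 a) := by rw [hκ]
    -- distinguish the two classes using a `Prop`-valued lift
    have hresp : ∀ p q, R A a a p q →
        (Sum.elim (fun f => Fact A a f) (fun _ => True) p : Prop)
          = Sum.elim (fun f => Fact A a f) (fun _ => True) q := by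
      rintro _ _ ⟨f, hf, rfl, rfl⟩
      simp [hf]
    have := congrArg (Quot.lift _ hresp) happ
    simp only [κ₁, κ₂, Quot.lift] at this
    have hfact : Fact A a (𝟙 a) := by
      have : Fact A a (𝟙 a) = True := this
      rw [this]; trivial
    obtain ⟨x, i, r, hi⟩ := hfact
    exact ⟨x, ⟨⟨i, r, hi⟩⟩⟩
  · intro h
    constructor
    intro F G α β hαβ
    ext b y
    obtain ⟨x, ⟨ρ⟩⟩ := h b
    have hy : y = F.map ρ.r (F.map ρ.i y) := by
      rw [← types_comp_apply (F.map ρ.i) (F.map ρ.r), ← F.map_comp, ρ.retract, F.map_id]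
      rfl
    have hx : α.app (A.obj x) = β.app (A.obj x) := congrFun (congrArg NatTrans.app hαβ) x
    calc α.app b y = α.app b (F.map ρ.r (F.map ρ.i y)) := by rw [← hy]
      _ = G.map ρ.r (α.app (A.obj x) (F.map ρ.i y)) := NatTrans.naturality_apply α ρ.r _
      _ = G.map ρ.r (β.app (A.obj x) (F.map ρ.i y)) := by rw [hx]
      _ = β.app b (F.map ρ.r (F.map ρ.i y)) := (NatTrans.naturality_apply β ρ.r _).symm
      _ = β.app b y := by rw [← hy]
end

section
/- Let I be a finite idempotent-complete category, J a finite category, and A : I ⥤ J a full functor. Then the essential image of A is closed under retracts: for any x : I and any a : J, if a is a retract of A.obj x, then there exists y : I with A.obj y ≅ a. -/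
open CategoryTheory

universe u

/-- In a finite monoid, some positive power of every element is idempotent. -/
lemma exists_idem_pow {M : Type*} [Monoid M] [Finite M] (f : M) :
    ∃ n, 0 < n ∧ f ^ n * f ^ n = f ^ n := by
  obtain ⟨m, k, hne, heq⟩ := Finite.exists_ne_map_eq_of_infinite (fun n : ℕ => f ^ n)
  wlog hlt : m < k generalizing m k
  · exact this k m hne.symm heq.symm (by omega)
  set d := k - m with hd
  have hd0 : 0 < d := by omega
  have hstep : ∀ a, m ≤ a → f ^ (a + d) = f ^ a := by
    intro a ha
    have : a + d = (k) + (a - m) := by omega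
    rw [this, pow_add, ← heq, ← pow_add]
    congr 1
    omega
  have hiter : ∀ j a, m ≤ a → f ^ (a + j * d) = f ^ a := by
    intro j
    induction j with
    | zero => simp
    | succ j ih =>
      intro a ha
      have : a + (j + 1) * d = (a + j * d) + d := by ring
      rw [this, hstep _ (by omega), ih a ha]
  refine ⟨d * (m + 1), by positivity, ?_⟩
  rw [← pow_add]
  have : d * (m + 1) + d * (m + 1) = d * (m + 1) + (m + 1) * d := by ring
  rw [this, hiter (m + 1) (d * (m + 1)) (by nlinarith)]

theorem stmt_9 (I J : Type u) [SmallCategory I] [FinCategory I] [IsIdempotentComplete I]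
    [SmallCategory J] [FinCategory J] (A : I ⥤ J) [A.Full]
    (x : I) (a : J) (h : Nonempty (_root_.Retract a (A.obj x))) :
    ∃ y : I, Nonempty (A.obj y ≅ a) := by
  obtain ⟨⟨i, r, hir⟩⟩ := h
  -- the idempotent on `A.obj x`
  set e : A.obj x ⟶ A.obj x := r ≫ i with he
  have hee : e ≫ e = e := by
    simp [he]
    slice_lhs 2 3 => rw [hir]
    simp
  obtain ⟨f, hf⟩ := A.map_surjective e
  -- find an idempotent power of `f` in the finite monoid `End x`
  set g : End x := f with hg
  haveI : Fintype (End x) := FinCategory.fintypeHom x x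
  haveI : Finite (End x) := Finite.of_fintype _
  obtain ⟨n, hn, hidem⟩ := exists_idem_pow (g : End x)
  -- `A.map (g ^ n) = e`
  have hepow : ∀ k : ℕ, 0 < k → A.map ((g : End x) ^ k : x ⟶ x) = e := by
    intro k hk
    induction k with
    | zero => omega
    | succ k ih =>
      rcases Nat.eq_zero_or_pos k with hk0 | hk0
      · subst hk0; simpa using hf
      · have : ((g : End x) ^ (k + 1) : x ⟶ x) = g ≫ ((g : End x) ^ k : x ⟶ x) := by
          rw [pow_succ, End.mul_def]
        rw [this, A.map_comp, hf, ih hk0, hee]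
  have hAfn : A.map ((g : End x) ^ n) = e := hepow n hn
  -- split the idempotent `f ^ n`
  have hidem' : ((g : End x) ^ n : x ⟶ x) ≫ ((g : End x) ^ n) = (g : End x) ^ n := by
    have := hidem
    rwa [End.mul_def] at this
  obtain ⟨y, s, p, hsp, hps⟩ :=
    IsIdempotentComplete.idempotents_split x ((g : End x) ^ n) hidem'
  -- build the isomorphism `A.obj y ≅ a`
  refine ⟨y, ⟨⟨A.map s ≫ r, i ≫ A.map p, ?_, ?_⟩⟩⟩
  · -- (A.map s ≫ r) ≫ (i ≫ A.map p) = 𝟙 (A.obj y)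
    have : A.map s ≫ (r ≫ i) ≫ A.map p = A.map s ≫ A.map ((g : End x) ^ n) ≫ A.map p := by
      rw [hAfn]
    calc (A.map s ≫ r) ≫ i ≫ A.map p = A.map s ≫ (r ≫ i) ≫ A.map p := by simp
      _ = A.map s ≫ A.map ((g : End x) ^ n) ≫ A.map p := this
      _ = A.map (s ≫ ((g : End x) ^ n) ≫ p) := by simp
      _ = 𝟙 (A.obj y) := by
          rw [← hps]
          have : s ≫ (p ≫ s) ≫ p = (s ≫ p) ≫ s ≫ p := by simp
          rw [this, hsp]
          simp
  · -- (i ≫ A.map p) ≫ (A.map s ≫ r) = 𝟙 a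
    calc (i ≫ A.map p) ≫ A.map s ≫ r = i ≫ A.map (p ≫ s) ≫ r := by simp
      _ = i ≫ A.map ((g : End x) ^ n) ≫ r := by rw [hps]
      _ = i ≫ e ≫ r := by rw [hAfn]
      _ = (i ≫ r) ≫ (i ≫ r) := by simp [he]
      _ = 𝟙 a := by rw [hir]; simp
end

section
/- Let I and J be finite idempotent-complete categories and A : I ⥤ J a functor. Then A is open if and only if A is upwards stably surjective, i.e. for every x : I, every a : J and every f : A.obj x ⟶ a there exist y : I, u : x ⟶ y and an isomorphism e : A.obj y ≅ a with A.map u ≫ e.hom = f (equivalently, for every x : I the induced coslice functor Under x ⥤ Under (A.obj x) is essentially surjective). -/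
open CategoryTheory

universe u

/-- A functor `A : I ⥤ J` is open if for every `x : I`, every `a : J` and every
`f : A.obj x ⟶ a`, there exist `y : I`, `u : x ⟶ y` and morphisms `s : a ⟶ A.obj y`,
`r : A.obj y ⟶ a` such that `s ≫ r = 𝟙 a` and `f ≫ s = A.map u`. -/
def IsOpenFunctor {I J : Type*} [Category I] [Category J] (A : I ⥤ J) : Prop :=
  ∀ (x : I) (a : J) (f : A.obj x ⟶ a),
    ∃ (y : I) (u : x ⟶ y) (s : a ⟶ A.obj y) (r : A.obj y ⟶ a),
      s ≫ r = 𝟙 a ∧ f ≫ s = A.map u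

lemma sigma_extract_aux {I : Type*} {J : Type*} [Category J] (Aobj : I → J) (a : J)
    {y y' : I} {p : (a ⟶ Aobj y) × (Aobj y ⟶ a)} {p' : (a ⟶ Aobj y') × (Aobj y' ⟶ a)}
    (h : (⟨y, p⟩ : Σ z : I, (a ⟶ Aobj z) × (Aobj z ⟶ a)) = ⟨y', p'⟩) :
    ∃ hy : y = y', p.1 = p'.1 ≫ eqToHom (by rw [hy]) ∧ p.2 = eqToHom (by rw [hy]) ≫ p'.2 := by
  cases h
  exact ⟨rfl, by simp, by simp⟩

lemma final_aux {I : Type*} {J : Type*} [Category I] [Category J] [IsIdempotentComplete I]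
    (A : I ⥤ J) {x : I} {a : J} (f : A.obj x ⟶ a) (ym : I) [Finite (ym ⟶ ym)]
    (sm : a ⟶ A.obj ym) (rm : A.obj ym ⟶ a) (hm : sm ≫ rm = 𝟙 a)
    (w : ym ⟶ ym) (hmapw : A.map w = rm ≫ sm)
    (V : x ⟶ ym) (hV : A.map V = f ≫ sm) :
    ∃ (y : I) (u : x ⟶ y) (e : A.obj y ≅ a), A.map u ≫ e.hom = f := by
  have hm' : ∀ {c : J} (h : a ⟶ c), sm ≫ rm ≫ h = h := by
    intro c h; rw [← Category.assoc, hm, Category.id_comp]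
  -- powers of w
  let wpow : ℕ → (ym ⟶ ym) := fun k => Nat.rec (𝟙 ym) (fun _ ih => ih ≫ w) k
  have hadd : ∀ p q, wpow (p + q) = wpow p ≫ wpow q := by
    intro p q
    induction q with
    | zero => exact (Category.comp_id _).symm
    | succ q ih =>
      show wpow (p + q) ≫ w = wpow p ≫ (wpow q ≫ w)
      rw [ih, Category.assoc]
  have hmappow : ∀ k, A.map (wpow (k + 1)) = rm ≫ sm := by
    intro k
    induction k with
    | zero =>
      show A.map (𝟙 ym ≫ w) = rm ≫ sm
      rw [Category.id_comp, hmapw]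
    | succ k ih =>
      show A.map (wpow (k + 1) ≫ w) = rm ≫ sm
      rw [A.map_comp, ih, hmapw, Category.assoc, hm']
  -- pigeonhole on powers
  obtain ⟨i0, j0, hij0, hpw⟩ := Finite.exists_ne_map_eq_of_infinite wpow
  wlog hilt : i0 < j0 generalizing i0 j0
  · exact this j0 i0 hij0.symm hpw.symm (by omega)
  have hd1 : 1 ≤ j0 - i0 := by omega
  set d := j0 - i0 with hd
  have hper : wpow (i0 + d) = wpow i0 := by
    rw [show i0 + d = j0 from by omega]; exact hpw.symm
  have hshift : ∀ c, wpow (i0 + d + c) = wpow (i0 + c) := by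
    intro c
    rw [hadd (i0 + d) c, hper, ← hadd]
  have hmult : ∀ c k, wpow (i0 + k + d * c) = wpow (i0 + k) := by
    intro c
    induction c with
    | zero => intro k; simp
    | succ c ih =>
      intro k
      have harith : i0 + k + d * (c + 1) = i0 + d + (k + d * c) := by ring
      rw [harith, hshift, show i0 + (k + d * c) = i0 + k + d * c from by ring, ih]
  obtain ⟨N, hN1, hidem⟩ : ∃ N, 1 ≤ N ∧ wpow N ≫ wpow N = wpow N := by
    refine ⟨d * (i0 + 1), ?_, ?_⟩
    · nlinarith
    · have hle : i0 ≤ d * (i0 + 1) := by nlinarith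
      have h4 : d * (i0 + 1) + d * (i0 + 1) = i0 + (d * (i0 + 1) - i0) + d * (i0 + 1) := by
        omega
      rw [← hadd, h4, hmult (i0 + 1) (d * (i0 + 1) - i0)]
      congr 1
      omega
  -- split the idempotent
  obtain ⟨z, ι, ep, hιe, heι⟩ := IsIdempotentComplete.idempotents_split ym (wpow N) hidem
  have hmapN : A.map (wpow N) = rm ≫ sm := by
    obtain ⟨k, hk⟩ : ∃ k, N = k + 1 := ⟨N - 1, by omega⟩
    rw [hk]; exact hmappow k
  have hz : ι ≫ wpow N ≫ ep = 𝟙 z := by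
    rw [← heι]
    slice_lhs 1 2 => rw [hιe]
    simp [hιe]
  refine ⟨z, V ≫ ep, ⟨A.map ι ≫ rm, sm ≫ A.map ep, ?_, ?_⟩, ?_⟩
  · calc (A.map ι ≫ rm) ≫ sm ≫ A.map ep
        = A.map ι ≫ (rm ≫ sm) ≫ A.map ep := by simp
      _ = A.map ι ≫ A.map (wpow N) ≫ A.map ep := by rw [hmapN]
      _ = A.map (ι ≫ wpow N ≫ ep) := by simp
      _ = 𝟙 (A.obj z) := by rw [hz, A.map_id]
  · show (sm ≫ A.map ep) ≫ A.map ι ≫ rm = 𝟙 a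
    slice_lhs 2 3 => rw [← A.map_comp, heι]
    rw [hmapN]
    simp only [Category.assoc]
    rw [hm', hm]
  · show A.map (V ≫ ep) ≫ A.map ι ≫ rm = f
    rw [A.map_comp]
    simp only [Category.assoc]
    slice_lhs 2 3 => rw [← A.map_comp, heι]
    rw [hmapN, hV]
    simp only [Category.assoc]
    rw [hm', hm, Category.comp_id]

theorem stmt_10 (I J : Type u) [SmallCategory I] [FinCategory I] [IsIdempotentComplete I]
    [SmallCategory J] [FinCategory J] [IsIdempotentComplete J] (A : I ⥤ J) :
    IsOpenFunctor A ↔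
      ∀ (x : I) (a : J) (f : A.obj x ⟶ a),
        ∃ (y : I) (u : x ⟶ y) (e : A.obj y ≅ a), A.map u ≫ e.hom = f := by
  constructor
  · intro hA x a f
    -- choose the data provided by openness
    have h' : ∀ (y : I) (g : A.obj y ⟶ a),
        ∃ (y' : I) (u : y ⟶ y') (s : a ⟶ A.obj y') (r : A.obj y' ⟶ a),
          s ≫ r = 𝟙 a ∧ g ≫ s = A.map u := fun y g => hA y a g
    choose Y U S R hSR hUS using h'
    -- the iterated chain
    let St := Σ' (y : I) (s : a ⟶ A.obj y) (r : A.obj y ⟶ a), s ≫ r = 𝟙 a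
    let st0 : St := ⟨Y x f, S x f, R x f, hSR x f⟩
    let step : St → St := fun st => ⟨Y st.1 st.2.2.1, S st.1 st.2.2.1, R st.1 st.2.2.1,
      hSR st.1 st.2.2.1⟩
    let F : ℕ → St := fun n => Nat.rec st0 (fun _ ih => step ih) n
    have hinv : ∀ n, (F n).2.1 ≫ (F n).2.2.1 = 𝟙 a := fun n => (F n).2.2.2
    -- from x to stage n
    have claim1 : ∀ n, ∃ V : x ⟶ (F n).1, A.map V = f ≫ (F n).2.1 := by
      intro n
      induction n with
      | zero => exact ⟨U x f, (hUS x f).symm⟩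
      | succ n ih =>
        obtain ⟨V, hV⟩ := ih
        refine ⟨V ≫ U (F n).1 (F n).2.2.1, ?_⟩
        show A.map (V ≫ U (F n).1 (F n).2.2.1) = f ≫ S (F n).1 (F n).2.2.1
        rw [A.map_comp, hV, ← hUS (F n).1 (F n).2.2.1, Category.assoc, ← Category.assoc _ _ (S _ _),
          hinv n, Category.id_comp]
    -- from stage m to a later stage
    have claim2 : ∀ (mm nn : ℕ), mm < nn →
        ∃ W : (F mm).1 ⟶ (F nn).1, A.map W = (F mm).2.2.1 ≫ (F nn).2.1 := by
      intro mm nn h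
      induction h with
      | refl => exact ⟨U (F mm).1 (F mm).2.2.1, (hUS (F mm).1 (F mm).2.2.1).symm⟩
      | @step n' h ih =>
        obtain ⟨W, hW⟩ := ih
        refine ⟨W ≫ U (F n').1 (F n').2.2.1, ?_⟩
        show A.map (W ≫ U (F n').1 (F n').2.2.1) = (F mm).2.2.1 ≫ S (F n').1 (F n').2.2.1
        rw [A.map_comp, hW, ← hUS (F n').1 (F n').2.2.1, Category.assoc,
          ← Category.assoc _ _ (S _ _), hinv n', Category.id_comp]
    -- pigeonhole on the stages
    let G : ℕ → Σ z : I, (a ⟶ A.obj z) × (A.obj z ⟶ a) :=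
      fun n => ⟨(F n).1, ((F n).2.1, (F n).2.2.1)⟩
    obtain ⟨m0, n0, hmn0, hG⟩ := Finite.exists_ne_map_eq_of_infinite G
    wlog hlt : m0 < n0 generalizing m0 n0
    · exact this n0 m0 hmn0.symm hG.symm (by omega)
    obtain ⟨hy, hs, hr⟩ := sigma_extract_aux A.obj a hG
    dsimp only at hs hr
    obtain ⟨W, hW⟩ := claim2 m0 n0 hlt
    obtain ⟨V, hV⟩ := claim1 m0
    refine final_aux A f (F m0).1 (F m0).2.1 (F m0).2.2.1 (hinv m0)
      (W ≫ eqToHom hy.symm) ?_ V hV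
    rw [A.map_comp, hW, eqToHom_map, Category.assoc, ← hs]
  · intro h x a f
    obtain ⟨y, u, e, he⟩ := h x a f
    exact ⟨y, u, e.inv, e.hom, e.inv_hom_id, by rw [← he]; simp⟩
end

section
/- Let Q, R, P be finite idempotent-complete categories, A : Q ⥤ P an open functor, and B : R ⥤ P any functor. Let W be the full subcategory of the comma category Comma A B consisting of those objects whose structural morphism A.obj q ⟶ B.obj r is an isomorphism (the iso-comma category, i.e. the pseudo-pullback of A and B), and let C : W ⥤ R be the evident projection functor. Then C is open. -/
open CategoryTheory

universe u

/-- Powers of an endomorphism by composition. -/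
def homPow {C : Type*} [Category C] {y : C} (t : y ⟶ y) : ℕ → (y ⟶ y)
  | 0 => 𝟙 y
  | n + 1 => t ≫ homPow t n

lemma homPow_add {C : Type*} [Category C] {y : C} (t : y ⟶ y) (m n : ℕ) :
    homPow t (m + n) = homPow t m ≫ homPow t n := by
  induction m with
  | zero => simp [homPow]
  | succ m ih =>
      have : m + 1 + n = (m + n) + 1 := by omega
      rw [this, homPow, homPow, ih, Category.assoc]

/-- Some positive composition-power of every endomorphism of an object with finitely
many endomorphisms is idempotent. -/
lemma exists_homPow_idem {C : Type*} [Category C] {y : C} [Finite (y ⟶ y)] (t : y ⟶ y) :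
    ∃ n : ℕ, 1 ≤ n ∧ homPow t n ≫ homPow t n = homPow t n := by
  obtain ⟨a, b, hab, he⟩ := Finite.exists_ne_map_eq_of_infinite (fun n : ℕ => homPow t (n + 1))
  wlog h : a < b generalizing a b
  · exact this b a hab.symm he.symm (by omega)
  set k := a + 1 with hk
  set d := b - a with hd
  have hd1 : 1 ≤ d := by omega
  have hkd : homPow t k = homPow t (k + d) := by
    rw [he]; congr 1; omega
  have step : ∀ m, k ≤ m → homPow t m = homPow t (m + d) := by
    intro m hm
    obtain ⟨c, rfl⟩ := Nat.exists_eq_add_of_le hm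
    calc homPow t (k + c) = homPow t (k + d) ≫ homPow t c := by rw [homPow_add, hkd]
      _ = homPow t (k + d + c) := (homPow_add t (k + d) c).symm
      _ = homPow t (k + c + d) := by congr 1; omega
  have step' : ∀ j m, k ≤ m → homPow t m = homPow t (m + j * d) := by
    intro j
    induction j with
    | zero => simp
    | succ j ih =>
      intro m hm
      rw [ih m hm, step (m + j * d) (by omega)]
      congr 1; ring
  refine ⟨k * d, Nat.mul_pos (by omega) hd1, ?_⟩
  rw [← homPow_add]
  exact (step' k (k * d) (Nat.le_mul_of_pos_right k hd1)).symm

section Chain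

variable {I J : Type*} [Category I] [Category J] {A : I ⥤ J} (hA : IsOpenFunctor A) (a : J)

/-- One step of the chain: given `(y, r : A y ⟶ a)`, apply openness of `A` to `r`
and record the new object together with the new retraction. -/
noncomputable def openStep (p : Σ y : I, (A.obj y ⟶ a)) : Σ y : I, (A.obj y ⟶ a) :=
  ⟨(hA p.1 a p.2).choose,
    (hA p.1 a p.2).choose_spec.choose_spec.choose_spec.choose⟩

lemma openStep_spec (p : Σ y : I, (A.obj y ⟶ a)) :
    ∃ (u : p.1 ⟶ (openStep hA a p).1) (s : a ⟶ A.obj (openStep hA a p).1),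
      s ≫ (openStep hA a p).2 = 𝟙 a ∧ p.2 ≫ s = A.map u := by
  obtain ⟨h1, h2⟩ :=
    (hA p.1 a p.2).choose_spec.choose_spec.choose_spec.choose_spec
  exact ⟨_, _, h1, h2⟩

/-- Iterated chain starting at `p₀`. -/
noncomputable def openChain (p₀ : Σ y : I, (A.obj y ⟶ a)) (n : ℕ) : Σ y : I, (A.obj y ⟶ a) :=
  (openStep hA a)^[n] p₀

lemma openChain_succ (p₀ : Σ y : I, (A.obj y ⟶ a)) (n : ℕ) :
    openChain hA a p₀ (n + 1) = openStep hA a (openChain hA a p₀ n) :=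
  Function.iterate_succ_apply' _ _ _

lemma openChain_hom (p₀ : Σ y : I, (A.obj y ⟶ a)) :
    ∀ i j, i < j →
      ∃ (c : (openChain hA a p₀ i).1 ⟶ (openChain hA a p₀ j).1)
        (s : a ⟶ A.obj (openChain hA a p₀ j).1),
        s ≫ (openChain hA a p₀ j).2 = 𝟙 a ∧ (openChain hA a p₀ i).2 ≫ s = A.map c := by
  intro i j hij
  induction j with
  | zero => omega
  | succ j ih =>
    have hspec := openStep_spec hA a (openChain hA a p₀ j)
    rw [← openChain_succ] at hspec
    obtain ⟨u, s, hs1, hs2⟩ := hspec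
    rcases Nat.lt_succ_iff_lt_or_eq.mp hij with h | rfl
    · obtain ⟨c, s', hs1', hs2'⟩ := ih h
      refine ⟨c ≫ u, s, hs1, ?_⟩
      rw [A.map_comp, ← hs2', ← hs2]
      rw [Category.assoc, ← Category.assoc s', hs1', Category.id_comp]
    · exact ⟨u, s, hs1, hs2⟩

/-- Transport the chain data along an equality of states to produce an endomorphism. -/
lemma chain_transport {p q : Σ y : I, (A.obj y ⟶ a)} (h : p = q)
    (c : p.1 ⟶ q.1) (s : a ⟶ A.obj q.1) (h1 : s ≫ q.2 = 𝟙 a) (h2 : p.2 ≫ s = A.map c) :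
    ∃ (t : p.1 ⟶ p.1) (σ : a ⟶ A.obj p.1), σ ≫ p.2 = 𝟙 a ∧ p.2 ≫ σ = A.map t := by
  subst h
  exact ⟨c, s, h1, h2⟩

end Chain


/-- Core construction: from a retract datum and an endomorphism datum produce the
iso-comma object together with the comparison map. -/
lemma mainAux {Q R P : Type u}
    [SmallCategory Q] [IsIdempotentComplete Q] [SmallCategory R] [SmallCategory P]
    (A : Q ⥤ P) (B : R ⥤ P) (x : Comma A B) (a : R) (f : x.right ⟶ a)
    (y' : Q) [Finite (y' ⟶ y')] (ρ : A.obj y' ⟶ B.obj a)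
    (c₀ : x.left ⟶ y') (s₀ : B.obj a ⟶ A.obj y') (hs₀ : s₀ ≫ ρ = 𝟙 (B.obj a))
    (hc₀ : (x.hom ≫ B.map f) ≫ s₀ = A.map c₀)
    (t : y' ⟶ y') (σ : B.obj a ⟶ A.obj y') (hσρ : σ ≫ ρ = 𝟙 (B.obj a))
    (hρσ : ρ ≫ σ = A.map t) :
    ∃ (z : Q) (β : A.obj z ⟶ B.obj a) (_ : IsIso β) (w : x.left ⟶ z),
      A.map w ≫ β = x.hom ≫ B.map f := by
  obtain ⟨n, hn1, hnidem⟩ := exists_homPow_idem t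
  have hAt : ∀ m, 1 ≤ m → A.map (homPow t m) = ρ ≫ σ := by
    intro m
    induction m with
    | zero => omega
    | succ m ih =>
      intro _
      rcases Nat.eq_zero_or_pos m with rfl | hm
      · show A.map (t ≫ homPow t 0) = ρ ≫ σ
        rw [show homPow t 0 = 𝟙 y' from rfl, Category.comp_id]
        exact hρσ.symm
      · show A.map (t ≫ homPow t m) = ρ ≫ σ
        rw [A.map_comp, ih hm, ← hρσ]
        simp only [← Category.assoc]
        rw [Category.assoc ρ σ ρ, hσρ, Category.comp_id]
  obtain ⟨z, ι, π, hιπ, hπι⟩ :=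
    IsIdempotentComplete.idempotents_split y' (homPow t n) hnidem
  have hAtn : A.map (homPow t n) = ρ ≫ σ := hAt n hn1
  have hfuse : A.map π ≫ A.map ι = A.map (homPow t n) := by rw [← A.map_comp, hπι]
  refine ⟨z, A.map ι ≫ ρ, ⟨⟨σ ≫ A.map π, ?_, ?_⟩⟩, c₀ ≫ π, ?_⟩
  · -- (A.map ι ≫ ρ) ≫ σ ≫ A.map π = 𝟙 (A.obj z)
    rw [show (A.map ι ≫ ρ) ≫ σ ≫ A.map π = A.map ι ≫ (ρ ≫ σ) ≫ A.map π from by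
      simp only [Category.assoc], ← hAtn, ← hπι]
    simp only [← A.map_comp]
    rw [show ι ≫ (π ≫ ι) ≫ π = 𝟙 z from by
      simp only [← Category.assoc]; rw [hιπ, Category.id_comp, hιπ], A.map_id]
  · -- (σ ≫ A.map π) ≫ A.map ι ≫ ρ = 𝟙 (B.obj a)
    simp only [Category.assoc]
    rw [show A.map π ≫ A.map ι ≫ ρ = A.map (homPow t n) ≫ ρ from by
      rw [← Category.assoc, hfuse], hAtn]
    simp only [← Category.assoc]
    rw [hσρ, Category.id_comp, hσρ]
  · -- A.map (c₀ ≫ π) ≫ A.map ι ≫ ρ = x.hom ≫ B.map f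
    rw [A.map_comp]
    simp only [Category.assoc]
    rw [show A.map π ≫ A.map ι ≫ ρ = A.map (homPow t n) ≫ ρ from by
      rw [← Category.assoc, hfuse], hAtn]
    rw [show (ρ ≫ σ) ≫ ρ = ρ from by rw [Category.assoc, hσρ, Category.comp_id]]
    rw [← hc₀, Category.assoc, hs₀, Category.comp_id]

theorem stmt_11 (Q R P : Type u)
    [SmallCategory Q] [FinCategory Q] [IsIdempotentComplete Q]
    [SmallCategory R] [FinCategory R] [IsIdempotentComplete R]
    [SmallCategory P] [FinCategory P] [IsIdempotentComplete P]
    (A : Q ⥤ P) (hA : IsOpenFunctor A) (B : R ⥤ P) :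
    IsOpenFunctor ((ObjectProperty.ι (fun c : Comma A B => IsIso c.hom)) ⋙
      Comma.snd A B) := by
  intro x a f
  let p₀ : Σ y : Q, (A.obj y ⟶ B.obj a) := ⟨x.obj.left, x.obj.hom ≫ B.map f⟩
  -- pigeonhole on states (skipping stage 0)
  obtain ⟨i', j', hne, heq⟩ :=
    Finite.exists_ne_map_eq_of_infinite (fun n : ℕ => openChain hA (B.obj a) p₀ (n + 1))
  wlog hlt : i' < j' generalizing i' j'
  · exact this j' i' hne.symm heq.symm (by omega)
  -- data from stage 0 to stage i'+1
  obtain ⟨c₀, s₀, hs₀, hc₀⟩ := openChain_hom hA (B.obj a) p₀ 0 (i' + 1) (by omega)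
  -- data from stage i'+1 to stage j'+1, transported back using the state equality
  obtain ⟨c, s, h1, h2⟩ := openChain_hom hA (B.obj a) p₀ (i' + 1) (j' + 1) (by omega)
  obtain ⟨t, σ, hσρ, hρσ⟩ := chain_transport (B.obj a) heq c s h1 h2
  obtain ⟨z, β, hiso, w, hw⟩ :=
    mainAux A B x.obj a f (openChain hA (B.obj a) p₀ (i' + 1)).1
      (openChain hA (B.obj a) p₀ (i' + 1)).2 c₀ s₀ hs₀ hc₀ t σ hσρ hρσ
  refine ⟨⟨{ left := z, right := a, hom := β }, hiso⟩, ⟨w, f, hw⟩, 𝟙 a, 𝟙 a, by simp, ?_⟩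
  simp only [Category.comp_id]
  rfl
end

section
/- Let I and J be finite idempotent-complete categories and A : I ⥤ J a functor. Then the following are equivalent: (1) A is open and every object a of J is a retract of A.obj x for some x : I (A is an open surjection); (2) A is essentially surjective and for every x : I, every a : J and every f : A.obj x ⟶ a there exist y : I, u : x ⟶ y and an isomorphism e : A.obj y ≅ a with A.map u ≫ e.hom = f (A is stably surjective and upwards stably surjective). -/
open CategoryTheory

universe u

/-- Iterated composition of an endomorphism. -/
def cpow {C : Type*} [Category C] {y : C} (w : y ⟶ y) : ℕ → (y ⟶ y)
  | 0 => 𝟙 y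
  | n + 1 => w ≫ cpow w n

lemma cpow_zero {C : Type*} [Category C] {y : C} (w : y ⟶ y) : cpow w 0 = 𝟙 y := rfl

lemma cpow_succ {C : Type*} [Category C] {y : C} (w : y ⟶ y) (n : ℕ) :
    cpow w (n + 1) = w ≫ cpow w n := rfl

lemma cpow_add {C : Type*} [Category C] {y : C} (w : y ⟶ y) (m n : ℕ) :
    cpow w (m + n) = cpow w m ≫ cpow w n := by
  induction m with
  | zero => rw [Nat.zero_add, cpow_zero, Category.id_comp]
  | succ m ih =>
    rw [show m + 1 + n = (m + n) + 1 by omega, cpow_succ, ih, cpow_succ, Category.assoc]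

/-- Every endomorphism of an object with finitely many endomorphisms has a positive
iterate which is idempotent. -/
lemma exists_cpow_idem {C : Type*} [Category C] {y : C} [Finite (y ⟶ y)] (w : y ⟶ y) :
    ∃ k, 0 < k ∧ cpow w k ≫ cpow w k = cpow w k := by
  obtain ⟨m, n, hmn, h⟩ := Finite.exists_ne_map_eq_of_infinite (fun k : ℕ => cpow w k)
  wlog hlt : m < n generalizing m n
  · exact this n m hmn.symm h.symm (by omega)
  have h' : cpow w m = cpow w n := h
  set d := n - m with hd
  have hd1 : 0 < d := by omega
  have step : ∀ N, m ≤ N → cpow w (N + d) = cpow w N := by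
    intro N hN
    obtain ⟨t, rfl⟩ : ∃ t, N = m + t := ⟨N - m, by omega⟩
    rw [show m + t + d = n + t by omega, cpow_add, cpow_add, h']
  have iter : ∀ j N, m ≤ N → cpow w (N + j * d) = cpow w N := by
    intro j
    induction j with
    | zero => simp
    | succ j ih =>
      intro N hN
      rw [show N + (j + 1) * d = (N + d) + j * d by ring, ih (N + d) (by omega), step N hN]
  refine ⟨d * (m + 1), by positivity, ?_⟩
  rw [← cpow_add, show d * (m + 1) + d * (m + 1) = d * (m + 1) + (m + 1) * d by ring,
    iter (m + 1) (d * (m + 1)) (by nlinarith)]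

lemma stably_surj_of_open {I J : Type u} [SmallCategory I] [FinCategory I]
    [IsIdempotentComplete I] [SmallCategory J] [FinCategory J] (A : I ⥤ J)
    (hA : IsOpenFunctor A) (x : I) (a : J) (f : A.obj x ⟶ a) :
    ∃ (y : I) (u : x ⟶ y) (e : A.obj y ≅ a), A.map u ≫ e.hom = f := by
  classical
  -- the type of "stages"
  set T := {d : Σ y : I, (a ⟶ A.obj y) × (A.obj y ⟶ a) // d.2.1 ≫ d.2.2 = 𝟙 a} with hT
  have H : ∀ d : T, ∃ (y : I) (u : d.1.1 ⟶ y) (s : a ⟶ A.obj y) (r : A.obj y ⟶ a),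
      s ≫ r = 𝟙 a ∧ d.1.2.2 ≫ s = A.map u := fun d => hA d.1.1 a d.1.2.2
  choose Y U S R h1 h2 using H
  set step : T → T := fun d => ⟨⟨Y d, S d, R d⟩, h1 d⟩ with hstep
  -- initial stage
  obtain ⟨y₀, u₀, s₀, r₀, h01, h02⟩ := hA x a f
  set d₀ : T := ⟨⟨y₀, s₀, r₀⟩, h01⟩ with hd₀
  set c : ℕ → T := fun n => step^[n] d₀ with hc
  have hsucc : ∀ m, c (m + 1) = step (c m) := fun m => Function.iterate_succ_apply' step m d₀
  -- each stage receives a map from x compatible with f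
  have fact1 : ∀ n, ∃ Un : x ⟶ (c n).1.1, A.map Un ≫ (c n).1.2.2 = f := by
    intro n
    induction n with
    | zero =>
      refine ⟨u₀, ?_⟩
      show A.map u₀ ≫ r₀ = f
      rw [← h02, Category.assoc, h01, Category.comp_id]
    | succ n ih =>
      obtain ⟨Un, hUn⟩ := ih
      rw [hsucc n]
      refine ⟨Un ≫ U (c n), ?_⟩
      show A.map (Un ≫ U (c n)) ≫ R (c n) = f
      rw [A.map_comp, Category.assoc, ← h2, Category.assoc, h1, Category.comp_id]
      exact hUn
  -- one-step connecting morphisms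
  have fact20 : ∀ m, ∃ u : (c m).1.1 ⟶ (c (m + 1)).1.1,
      A.map u = (c m).1.2.2 ≫ (c (m + 1)).1.2.1 := by
    intro m
    rw [hsucc m]
    exact ⟨U (c m), (h2 (c m)).symm⟩
  -- connecting morphisms between stages
  have fact2 : ∀ (k m : ℕ), ∃ w : (c m).1.1 ⟶ (c (k + 1 + m)).1.1,
      A.map w = (c m).1.2.2 ≫ (c (k + 1 + m)).1.2.1 := by
    intro k
    induction k with
    | zero =>
      intro m
      rw [show 0 + 1 + m = m + 1 by omega]
      exact fact20 m
    | succ k ih =>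
      intro m
      obtain ⟨w', hw'⟩ := ih m
      obtain ⟨u, hu⟩ := fact20 (k + 1 + m)
      rw [show k + 1 + 1 + m = k + 1 + m + 1 by omega]
      refine ⟨w' ≫ u, ?_⟩
      rw [A.map_comp, hw', hu, Category.assoc, ← Category.assoc ((c (k + 1 + m)).1.2.1),
        (c (k + 1 + m)).2, Category.id_comp]
  -- pigeonhole
  have : Finite T := by
    have : Finite (Σ y : I, (a ⟶ A.obj y) × (A.obj y ⟶ a)) := by infer_instance
    exact Subtype.finite
  obtain ⟨m, n, hmn, hcmn⟩ := Finite.exists_ne_map_eq_of_infinite c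
  wlog hlt : m < n generalizing m n
  · exact this n m hmn.symm hcmn.symm (by omega)
  obtain ⟨k, rfl⟩ : ∃ k, n = k + 1 + m := ⟨n - m - 1, by omega⟩
  obtain ⟨Um, hUm⟩ := fact1 m
  obtain ⟨w, hw⟩ := fact2 k m
  revert w hw
  rw [← hcmn]
  revert Um hUm
  clear fact1 fact2 fact20 hcmn hmn hlt
  generalize c m = D
  obtain ⟨⟨y, s, r⟩, hsr⟩ := D
  intro Um hUm w hw
  change x ⟶ y at Um
  change y ⟶ y at w
  dsimp only at hUm hw hsr
  -- idempotent power
  obtain ⟨kk, hkk, hidem⟩ := exists_cpow_idem w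
  have hpow : ∀ j, A.map (cpow w (j + 1)) = r ≫ s := by
    intro j
    induction j with
    | zero =>
      rw [cpow_succ, cpow_zero, Category.comp_id, hw]
    | succ j ih =>
      rw [cpow_succ, A.map_comp, ih, hw, Category.assoc, ← Category.assoc s, hsr,
        Category.id_comp]
  obtain ⟨j, rfl⟩ : ∃ j, kk = j + 1 := ⟨kk - 1, by omega⟩
  have hmapw : A.map (cpow w (j + 1)) = r ≫ s := hpow j
  obtain ⟨z, i, q, hiq, hqi⟩ :=
    IsIdempotentComplete.idempotents_split y (cpow w (j + 1)) hidem
  refine ⟨z, Um ≫ q, ⟨A.map i ≫ r, s ≫ A.map q, ?_, ?_⟩, ?_⟩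
  · -- hom ≫ inv
    calc (A.map i ≫ r) ≫ s ≫ A.map q = A.map i ≫ (r ≫ s) ≫ A.map q := by
          simp only [Category.assoc]
      _ = A.map i ≫ A.map (cpow w (j + 1)) ≫ A.map q := by rw [hmapw]
      _ = A.map ((i ≫ q) ≫ (i ≫ q)) := by
          rw [← hqi]; simp only [A.map_comp, Category.assoc]
      _ = 𝟙 (A.obj z) := by rw [hiq, Category.id_comp, A.map_id]
  · -- inv ≫ hom
    calc (s ≫ A.map q) ≫ A.map i ≫ r = s ≫ A.map (q ≫ i) ≫ r := by
          simp only [A.map_comp, Category.assoc]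
      _ = s ≫ (r ≫ s) ≫ r := by rw [hqi, hmapw]
      _ = (s ≫ r) ≫ (s ≫ r) := by simp only [Category.assoc]
      _ = 𝟙 a := by rw [hsr, Category.comp_id]
  · -- compatibility
    show A.map (Um ≫ q) ≫ A.map i ≫ r = f
    calc A.map (Um ≫ q) ≫ A.map i ≫ r = A.map Um ≫ A.map (q ≫ i) ≫ r := by
          simp only [A.map_comp, Category.assoc]
      _ = A.map Um ≫ (r ≫ s) ≫ r := by rw [hqi, hmapw]
      _ = A.map Um ≫ r ≫ (s ≫ r) := by simp only [Category.assoc]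
      _ = f := by rw [hsr, Category.comp_id, hUm]

theorem stmt_12 (I J : Type u) [SmallCategory I] [FinCategory I] [IsIdempotentComplete I]
    [SmallCategory J] [FinCategory J] [IsIdempotentComplete J] (A : I ⥤ J) :
    (IsOpenFunctor A ∧ ∀ a : J, ∃ x : I, Nonempty (_root_.Retract a (A.obj x))) ↔
      (A.EssSurj ∧ ∀ (x : I) (a : J) (f : A.obj x ⟶ a),
        ∃ (y : I) (u : x ⟶ y) (e : A.obj y ≅ a), A.map u ≫ e.hom = f) := by
  constructor
  · rintro ⟨hopen, hret⟩
    refine ⟨⟨fun a => ?_⟩, fun x a f => stably_surj_of_open A hopen x a f⟩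
    obtain ⟨x, ⟨ret⟩⟩ := hret a
    obtain ⟨y, u, e, -⟩ := stably_surj_of_open A hopen x a ret.r
    exact ⟨y, ⟨e⟩⟩
  · rintro ⟨hess, hstab⟩
    constructor
    · intro x a f
      obtain ⟨y, u, e, he⟩ := hstab x a f
      exact ⟨y, u, e.inv, e.hom, e.inv_hom_id, by rw [← he, Category.assoc, e.hom_inv_id,
        Category.comp_id]⟩
    · intro a
      obtain ⟨x, ⟨e⟩⟩ := hess.mem_essImage a
      exact ⟨x, ⟨⟨e.inv, e.hom, e.inv_hom_id⟩⟩⟩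
end

section
/- Let I be a finite category. The full subcategory of the functor category (I ⥤ FintypeCat) ⥤ FintypeCat consisting of those functors that preserve finite limits and finite colimits is equivalent to the idempotent completion Karoubi I; in particular, every finite-limit- and finite-colimit-preserving functor (I ⥤ FintypeCat) ⥤ FintypeCat is isomorphic to the evaluation functor at some object of Karoubi I. -/
open CategoryTheory CategoryTheory.Limits CategoryTheory.Idempotents

universe u

/-- The evaluation functor associated to an object `x` of the idempotent completion
`Karoubi I`: it sends `X : I ⥤ FintypeCat` to the retract of `X.obj x.X` given by splitting
the idempotent `X.map x.p`, realized as the set of its fixed points. -/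
noncomputable def karoubiEval {I : Type u} [SmallCategory I] (x : Karoubi I) :
    (I ⥤ FintypeCat.{u}) ⥤ FintypeCat.{u} where
  obj X :=
    haveI : DecidablePred (fun a : X.obj x.X => X.map x.p a = a) := fun _ => Classical.dec _
    FintypeCat.of {a : X.obj x.X // X.map x.p a = a}
  map {X Y} f := FintypeCat.homMk fun a => ⟨f.app x.X a.1, by
    have h := congrFun (congrArg (fun (g : X.obj x.X ⟶ Y.obj x.X) => (g : X.obj x.X → Y.obj x.X))
      (f.naturality x.p)) a.1
    simp only [ConcreteCategory.comp_apply, a.2] at h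
    exact h.symm⟩
  map_id X := by
    ext a
    rfl
  map_comp f g := by
    ext a
    rfl

open Opposite

universe w w' v




namespace Scratch

section Retract
variable {A : Type u} [Category.{v} A] {B : Type w} [Category.{w'} B]
variable {J : Type*} [Category J]

lemma preservesLimitsOfShape_of_retract {H E : A ⥤ B} (i : H ⟶ E) (r : E ⟶ H)
    (hir : i ≫ r = 𝟙 H) [PreservesLimitsOfShape J E] : PreservesLimitsOfShape J H where
  preservesLimit {K} := ⟨fun {t} ht => ⟨{
    lift := fun s =>
      (isLimitOfPreserves E ht).lift ((Cones.postcompose (Functor.whiskerLeft K i)).obj s) ≫ r.app t.pt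
    fac := fun s j => by
      have h1 := (isLimitOfPreserves E ht).fac ((Cones.postcompose (Functor.whiskerLeft K i)).obj s) j
      have h2 := r.naturality (t.π.app j)
      simp only [Functor.const_obj_obj] at h1 h2 ⊢
      dsimp at h1 h2 ⊢
      erw [Category.assoc, ← h2, reassoc_of% h1]
      have h4 : i.app (K.obj j) ≫ r.app (K.obj j) = 𝟙 _ := by rw [← NatTrans.comp_app, hir, NatTrans.id_app]
      change (s.π.app j ≫ i.app (K.obj j)) ≫ r.app (K.obj j) = s.π.app j
      rw [Category.assoc, h4]
      exact Category.comp_id _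
    uniq := fun s m hm => by
      have key : m ≫ i.app t.pt = (isLimitOfPreserves E ht).lift
          ((Cones.postcompose (Functor.whiskerLeft K i)).obj s) := by
        apply (isLimitOfPreserves E ht).uniq ((Cones.postcompose (Functor.whiskerLeft K i)).obj s)
        intro j
        have h2 := i.naturality (t.π.app j)
        simp only [Functor.const_obj_obj] at h2 ⊢
        dsimp at h2 ⊢
        erw [Category.assoc, ← h2, ← Category.assoc]
        have h3 := hm j
        dsimp at h3
        erw [h3]
        rfl
      have h4 : i.app t.pt ≫ r.app t.pt = 𝟙 (H.obj t.pt) := by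
        rw [← NatTrans.comp_app, hir, NatTrans.id_app]
      dsimp
      rw [← key, Category.assoc, h4]
      simp }⟩⟩

lemma preservesColimitsOfShape_of_retract {H E : A ⥤ B} (i : H ⟶ E) (r : E ⟶ H)
    (hir : i ≫ r = 𝟙 H) [PreservesColimitsOfShape J E] : PreservesColimitsOfShape J H where
  preservesColimit {K} := ⟨fun {t} ht => ⟨{
    desc := fun s =>
      i.app t.pt ≫ (isColimitOfPreserves E ht).desc ((Cocone.precompose (Functor.whiskerLeft K r)).obj s)
    fac := fun s j => by
      have h1 := (isColimitOfPreserves E ht).fac ((Cocone.precompose (Functor.whiskerLeft K r)).obj s) j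
      have h2 := i.naturality (t.ι.app j)
      simp only [Functor.const_obj_obj] at h1 h2 ⊢
      dsimp at h1 h2 ⊢
      rw [← Category.assoc, h2, Category.assoc, h1, ← Category.assoc, ← NatTrans.comp_app, hir]
      simp
    uniq := fun s m hm => by
      have key : r.app t.pt ≫ m = (isColimitOfPreserves E ht).desc
          ((Cocone.precompose (Functor.whiskerLeft K r)).obj s) := by
        apply (isColimitOfPreserves E ht).uniq ((Cocone.precompose (Functor.whiskerLeft K r)).obj s)
        intro j
        have h2 := r.naturality (t.ι.app j)
        simp only [Functor.const_obj_obj] at h2 ⊢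
        dsimp at h2 ⊢
        rw [← Category.assoc, h2, Category.assoc]
        have h3 := hm j
        dsimp at h3
        rw [h3]
      have h4 : i.app t.pt ≫ r.app t.pt = 𝟙 (H.obj t.pt) := by
        rw [← NatTrans.comp_app, hir, NatTrans.id_app]
      dsimp
      rw [← key, ← Category.assoc, h4]
      simp }⟩⟩

end Retract

lemma fintype_jointly_surjective {J : Type w} [Category.{w'} J] {D : J ⥤ FintypeCat.{u}}
    (t : Cocone D) (h : IsColimit t) (b : t.pt) : ∃ j a, t.ι.app j a = b := by
  classical
  let S : FintypeCat.{u} := FintypeCat.of {v : t.pt // ∃ j a, t.ι.app j a = v}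
  let t' : Cocone D :=
    { pt := S
      ι := { app := fun j => FintypeCat.homMk fun x => (⟨t.ι.app j x, j, x, rfl⟩ : S)
             naturality := fun j j' f => by
               ext x
               apply Subtype.ext
               exact ConcreteCategory.congr_hom (t.w f) x } }
  have key : h.desc t' ≫ FintypeCat.homMk (Subtype.val : S → t.pt) = 𝟙 t.pt := by
    have e1 : ∀ j, t.ι.app j ≫ (h.desc t' ≫ FintypeCat.homMk (Subtype.val : S → t.pt)) = t.ι.app j := by
      intro j
      rw [← Category.assoc, h.fac t' j]
      rfl
    exact (h.uniq t _ e1).trans (h.uniq t (𝟙 t.pt) (fun j => Category.comp_id _)).symm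
  have : (h.desc t' b).val = b := ConcreteCategory.congr_hom key b
  exact ⟨_, _, (h.desc t' b).2.choose_spec.choose_spec.trans this⟩

end Scratch



namespace Scratch3

variable {I : Type u} [SmallCategory I]

/-- inclusion of `karoubiEval x` into the evaluation functor. -/
noncomputable def kInc (x : Karoubi I) : karoubiEval x ⟶ (evaluation I FintypeCat.{u}).obj x.X where
  app X := FintypeCat.homMk fun a => a.1
  naturality X Y f := rfl

noncomputable def kProj (x : Karoubi I) : (evaluation I FintypeCat.{u}).obj x.X ⟶ karoubiEval x where
  app X := FintypeCat.homMk fun a => ⟨X.map x.p a, by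
    have := ConcreteCategory.congr_hom (X.map_comp x.p x.p).symm a
    rw [x.idem] at this
    exact this⟩
  naturality X Y f := by
    ext a
    apply Subtype.ext
    exact (ConcreteCategory.congr_hom (f.naturality x.p) a).symm

lemma kInc_kProj (x : Karoubi I) : kInc x ≫ kProj x = 𝟙 (karoubiEval x) := by
  ext X a
  apply Subtype.ext
  exact a.2

lemma karoubiEval_preservesFiniteLimits (x : Karoubi I) :
    PreservesFiniteLimits (karoubiEval x) := by
  constructor
  intro J _ _
  have : PreservesLimitsOfShape J ((evaluation I FintypeCat.{u}).obj x.X) := inferInstance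
  exact Scratch.preservesLimitsOfShape_of_retract (kInc x) (kProj x) (kInc_kProj x)

lemma karoubiEval_preservesFiniteColimits (x : Karoubi I) :
    PreservesFiniteColimits (karoubiEval x) := by
  constructor
  intro J _ _
  have : PreservesColimitsOfShape J ((evaluation I FintypeCat.{u}).obj x.X) := inferInstance
  exact Scratch.preservesColimitsOfShape_of_retract (kInc x) (kProj x) (kInc_kProj x)

/-- `karoubiEval` as a functor. -/
noncomputable def toEval : Karoubi I ⥤ ((I ⥤ FintypeCat.{u}) ⥤ FintypeCat.{u}) where
  obj x := karoubiEval x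
  map {x y} f :=
    { app := fun X => FintypeCat.homMk fun a => ⟨X.map f.f a.1, by
        have h1 : f.f ≫ y.p = f.f := Karoubi.comp_p f
        have h2 := ConcreteCategory.congr_hom (X.map_comp f.f y.p) a.1
        rw [h1] at h2
        exact h2.symm⟩
      naturality := fun X Y u => by
        ext a
        apply Subtype.ext
        exact (ConcreteCategory.congr_hom (u.naturality f.f) a.1).symm }
  map_id x := by
    ext X a
    apply Subtype.ext
    exact a.2
  map_comp f g := by
    ext X a
    apply Subtype.ext
    exact ConcreteCategory.congr_hom (X.map_comp f.f g.f) a.1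

end Scratch3




namespace Scratch2

variable {I : Type u} [SmallCategory I] [FinCategory I]

/-- corepresentable functor `Hom(c, -)` valued in finite types. -/
@[simps]
def yObj (c : I) : I ⥤ FintypeCat.{u} where
  obj j := FintypeCat.of (c ⟶ j)
  map f := FintypeCat.homMk fun g => g ≫ f
  map_id j := by ext g; exact Category.comp_id g
  map_comp f g := by ext h; exact (Category.assoc h f g).symm

/-- The co-Yoneda embedding `Iᵒᵖ ⥤ (I ⥤ FintypeCat)`. -/
@[simps]
def yFun : Iᵒᵖ ⥤ (I ⥤ FintypeCat.{u}) where
  obj i := yObj i.unop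
  map {i i'} f := { app := fun j => FintypeCat.homMk fun g => f.unop ≫ g,
                    naturality := fun j j' h => by ext g; change f.unop ≫ g ≫ h = (f.unop ≫ g) ≫ h; exact (Category.assoc _ _ _).symm }
  map_id i := by ext j g; exact Category.id_comp g
  map_comp f g := by ext j h; exact Category.assoc _ _ _

noncomputable instance elementsFinCategory {J : Type u} [SmallCategory J] [FinCategory J]
    (H : J ⥤ FintypeCat.{u}) : FinCategory (H ⋙ FintypeCat.incl).Elements := by
  classical
  exact
  { fintypeObj := by
      dsimp [Functor.Elements]
      exact Fintype.ofFinite _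
    fintypeHom := fun p q => by
      apply Fintype.ofInjective (fun f => (f.val : p.1 ⟶ q.1))
      intro f g h
      exact Subtype.ext h }

abbrev mkE (X : I ⥤ FintypeCat.{u}) (j : I) (a : X.obj j) : (X ⋙ FintypeCat.incl).Elements :=
  Functor.elementsMk _ j a

/-- The canonical diagram of corepresentables over `X`. -/
noncomputable def canDiagram (X : I ⥤ FintypeCat.{u}) :
    ((X ⋙ FintypeCat.incl).Elements)ᵒᵖ ⥤ (I ⥤ FintypeCat.{u}) :=
  (CategoryOfElements.π (X ⋙ FintypeCat.incl)).op ⋙ yFun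

/-- The canonical cocone with point `X`. -/
noncomputable def canCocone (X : I ⥤ FintypeCat.{u}) : Cocone (canDiagram X) where
  pt := X
  ι :=
    { app := fun e =>
        { app := fun j => FintypeCat.homMk fun (g : e.unop.1 ⟶ j) => X.map g e.unop.2
          naturality := fun j j' h => by
            ext g
            exact ConcreteCategory.congr_hom (X.map_comp g h) e.unop.2 }
      naturality := fun e e' f => by
        ext j g
        have hf : (X ⋙ FintypeCat.incl).map f.unop.val e'.unop.2 = e.unop.2 := f.unop.2
        dsimp [canDiagram, yFun, yObj] at g ⊢
        exact (ConcreteCategory.congr_hom (X.map_comp f.unop.val g) e'.unop.2).trans (congrArg (fun y => X.map g y) hf) }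

noncomputable def canIsColimit (X : I ⥤ FintypeCat.{u}) : IsColimit (canCocone X) where
  desc s :=
    { app := fun j => FintypeCat.homMk fun a => (s.ι.app (op (mkE X j a))).app j (𝟙 j)
      naturality := fun j j' h => by
        ext a
        have hnat := ConcreteCategory.congr_hom (NatTrans.congr_app (s.ι.naturality
          ((CategoryOfElements.homMk (mkE X j a) (mkE X j' (X.map h a)) h rfl).op)) j') (𝟙 j')
        change (s.ι.app (op (mkE X j a))).app j' (h ≫ 𝟙 j') = (s.ι.app (op (mkE X j' (X.map h a)))).app j' (𝟙 j') at hnat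
        have hnat2 := ConcreteCategory.congr_hom ((s.ι.app (op (mkE X j a))).naturality h) (𝟙 j)
        change (s.ι.app (op (mkE X j a))).app j' (𝟙 j ≫ h) = s.pt.map h ((s.ι.app (op (mkE X j a))).app j (𝟙 j)) at hnat2
        change (s.ι.app (op (mkE X j' (X.map h a)))).app j' (𝟙 j') = s.pt.map h ((s.ι.app (op (mkE X j a))).app j (𝟙 j))
        have e1 : h ≫ 𝟙 j' = 𝟙 j ≫ h := by simp
        exact hnat.symm.trans ((congrArg (fun y => (s.ι.app (op (mkE X j a))).app j' y) e1).trans hnat2)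
    }
  fac s e := by
    ext j g
    have hnat := ConcreteCategory.congr_hom (NatTrans.congr_app (s.ι.naturality
      ((CategoryOfElements.homMk e.unop (mkE X j (X.map g e.unop.2)) g rfl).op)) j) (𝟙 j)
    change (s.ι.app e).app j (g ≫ 𝟙 j) = (s.ι.app (op (mkE X j (X.map g e.unop.2)))).app j (𝟙 j) at hnat
    change (s.ι.app (op (mkE X j (X.map g e.unop.2)))).app j (𝟙 j) = (s.ι.app e).app j g
    exact hnat.symm.trans (congrArg (fun y => (s.ι.app e).app j y) (Category.comp_id _))
  uniq s m hm := by
    ext j a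
    have h1 := ConcreteCategory.congr_hom (NatTrans.congr_app (hm (op (mkE X j a))) j) (𝟙 j)
    dsimp [canCocone, FintypeCat.comp_apply, FintypeCat.homMk_apply] at h1
    exact (congrArg (fun y => m.app j y) (ConcreteCategory.congr_hom (X.map_id j) a)).symm.trans h1

end Scratch2


namespace Scratch4
open Scratch2 Scratch3

variable {I : Type u} [SmallCategory I] [FinCategory I]

/-- co-Yoneda morphism `yObj c ⟶ X` attached to `a : X.obj c`. -/
def coyo {X : I ⥤ FintypeCat.{u}} {c : I} (a : X.obj c) : yObj c ⟶ X where
  app j := FintypeCat.homMk fun (h : c ⟶ j) => X.map h a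
  naturality j j' h := by
    ext g
    exact ConcreteCategory.congr_hom (X.map_comp g h) a

/-- the canonical element of `karoubiEval x (yObj x.X)`. -/
def kpt (x : Karoubi I) : (karoubiEval (I := I) x).obj (yObj x.X) :=
  ⟨x.p, x.idem⟩

instance : (toEval (I := I)).Faithful where
  map_injective {x y} {f g} h := by
    apply Karoubi.hom_ext
    have h1 := ConcreteCategory.congr_hom (NatTrans.congr_app h (yObj x.X)) (kpt x)
    have h2 := congrArg Subtype.val h1
    dsimp [toEval, kpt] at h2
    change x.p ≫ f.f = x.p ≫ g.f at h2
    rwa [Karoubi.p_comp f, Karoubi.p_comp g] at h2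

instance : (toEval (I := I)).Full where
  map_surjective {x y} τ := by
    refine ⟨⟨(τ.app (yObj x.X) (kpt x)).1, ?_⟩, ?_⟩
    · -- comm
      have hyp : (τ.app (yObj x.X) (kpt x)).1 ≫ y.p = (τ.app (yObj x.X) (kpt x)).1 :=
        (τ.app (yObj x.X) (kpt x)).2
      have harg : (toEval.obj x).map (yFun.map (x.p.op)) (kpt x) = kpt x := by
        apply Subtype.ext
        dsimp [toEval, karoubiEval, yFun, yObj, kpt]
        change x.p ≫ x.p = x.p
        rw [x.idem]
      have hnat := ConcreteCategory.congr_hom (τ.naturality (yFun.map (x.p.op))) (kpt x)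
      have hval := congrArg Subtype.val hnat
      change ((τ.app _) ((toEval.obj x).map (yFun.map (x.p.op)) (kpt x))).1 = ((toEval.obj y).map (yFun.map (x.p.op)) (τ.app _ (kpt x))).1 at hval
      rw [harg] at hval
      dsimp [toEval, karoubiEval, yFun, yObj] at hval
      rw [hyp]
      exact hval.symm
    · ext X a
      apply Subtype.ext
      have harg : (toEval.obj x).map (coyo a.1) (kpt x) = a := by
        apply Subtype.ext
        exact a.2
      have hnat := ConcreteCategory.congr_hom (τ.naturality (coyo a.1)) (kpt x)
      have hval := congrArg Subtype.val hnat
      change ((τ.app X) ((toEval.obj x).map (coyo a.1) (kpt x))).1 = ((toEval.obj y).map (coyo a.1) (τ.app _ (kpt x))).1 at hval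
      rw [harg] at hval
      dsimp [toEval, karoubiEval, coyo] at hval
      dsimp [toEval]
      exact hval.symm

end Scratch4

namespace Scratch5
open Scratch2 Scratch3

variable {I : Type u} [SmallCategory I] [FinCategory I]

/-- binary product in `I ⥤ FintypeCat`. -/
@[simps]
def prodC (X Y : I ⥤ FintypeCat.{u}) : I ⥤ FintypeCat.{u} where
  obj j := FintypeCat.of (X.obj j × Y.obj j)
  map f := FintypeCat.homMk fun p => (X.map f p.1, Y.map f p.2)
  map_id j := by
    ext p
    exacts [ConcreteCategory.congr_hom (X.map_id j) p.1, ConcreteCategory.congr_hom (Y.map_id j) p.2]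
  map_comp f g := by
    ext p
    exacts [ConcreteCategory.congr_hom (X.map_comp f g) p.1, ConcreteCategory.congr_hom (Y.map_comp f g) p.2]

@[simps]
def prodFst (X Y : I ⥤ FintypeCat.{u}) : prodC X Y ⟶ X where
  app j := FintypeCat.homMk fun p => p.1
  naturality j j' h := rfl

@[simps]
def prodSnd (X Y : I ⥤ FintypeCat.{u}) : prodC X Y ⟶ Y where
  app j := FintypeCat.homMk fun p => p.2
  naturality j j' h := rfl

def prodFan (X Y : I ⥤ FintypeCat.{u}) : BinaryFan X Y :=
  BinaryFan.mk (prodFst X Y) (prodSnd X Y)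

def prodIsLimit (X Y : I ⥤ FintypeCat.{u}) : IsLimit (prodFan X Y) :=
  BinaryFan.isLimitMk
    (fun s =>
      { app := fun j => FintypeCat.homMk fun a => (s.fst.app j a, s.snd.app j a)
        naturality := fun j j' h => by
          ext a
          exact Prod.ext (ConcreteCategory.congr_hom (s.fst.naturality h) a) (ConcreteCategory.congr_hom (s.snd.naturality h) a) })
    (fun s => by ext j a; rfl)
    (fun s => by ext j a; rfl)
    (fun s m h1 h2 => by
      ext j a
      exact Prod.ext (ConcreteCategory.congr_hom (NatTrans.congr_app h1 j) a) (ConcreteCategory.congr_hom (NatTrans.congr_app h2 j) a))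

/-- equalizer in `I ⥤ FintypeCat`. -/
@[simps]
noncomputable def eqC {X Y : I ⥤ FintypeCat.{u}} (α β : X ⟶ Y) : I ⥤ FintypeCat.{u} where
  obj j :=
    haveI : DecidablePred (fun v : X.obj j => α.app j v = β.app j v) := fun _ => Classical.dec _
    FintypeCat.of {v : X.obj j // α.app j v = β.app j v}
  map {j j'} f := FintypeCat.homMk fun v => ⟨X.map f v.1, by
    have h1 : α.app j' (X.map f v.1) = Y.map f (α.app j v.1) := ConcreteCategory.congr_hom (α.naturality f) v.1
    have h2 : β.app j' (X.map f v.1) = Y.map f (β.app j v.1) := ConcreteCategory.congr_hom (β.naturality f) v.1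
    rw [h1, h2, v.2]⟩
  map_id j := by
    ext v
    exact ConcreteCategory.congr_hom (X.map_id j) v.1
  map_comp f g := by
    ext v
    exact ConcreteCategory.congr_hom (X.map_comp f g) v.1

@[simps]
noncomputable def eqInc {X Y : I ⥤ FintypeCat.{u}} (α β : X ⟶ Y) : eqC α β ⟶ X where
  app j := FintypeCat.homMk fun v => v.1
  naturality j j' h := rfl

noncomputable def eqFork {X Y : I ⥤ FintypeCat.{u}} (α β : X ⟶ Y) : Fork α β :=
  Fork.ofι (eqInc α β) (by ext j v; exact v.2)

noncomputable def eqIsLimit {X Y : I ⥤ FintypeCat.{u}} (α β : X ⟶ Y) : IsLimit (eqFork α β) :=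
  Fork.IsLimit.mk _
    (fun s =>
      { app := fun j => FintypeCat.homMk fun w => ⟨s.ι.app j w, ConcreteCategory.congr_hom (NatTrans.congr_app s.condition j) w⟩
        naturality := fun j j' h => by
          ext w
          exact Subtype.ext (ConcreteCategory.congr_hom (s.ι.naturality h) w) })
    (fun s => by ext j w; rfl)
    (fun s m hm => by
      ext j w
      exact Subtype.ext (ConcreteCategory.congr_hom (NatTrans.congr_app hm j) w))

/-- terminal object of `I ⥤ FintypeCat`. -/
def termC : I ⥤ FintypeCat.{u} :=
  (Functor.const I).obj (FintypeCat.of PUnit)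

def termIsTerminal : IsTerminal (termC (I := I)) :=
  IsTerminal.ofUniqueHom (fun X => { app := fun j => FintypeCat.homMk fun _ => PUnit.unit, naturality := fun _ _ _ => rfl })
    (fun X m => by ext j a; exact (Subsingleton.elim (α := PUnit) _ _))

section Flat

variable (F : (I ⥤ FintypeCat.{u}) ⥤ FintypeCat.{u})

/-- category of elements of `F` restricted to corepresentables. -/
abbrev EG := ((yFun (I := I) ⋙ F) ⋙ FintypeCat.incl).Elements

variable [PreservesFiniteLimits F] [PreservesFiniteColimits F]

lemma EG_nonempty : Nonempty (EG F) := by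
  have hterm : IsTerminal (F.obj (termC (I := I))) := termIsTerminal.isTerminalObj F
  let t0 : F.obj (termC (I := I)) := hterm.from (FintypeCat.of PUnit) PUnit.unit
  obtain ⟨e, c, -⟩ := Scratch.fintype_jointly_surjective
    (F.mapCocone (canCocone (termC (I := I)))) (isColimitOfPreserves F (canIsColimit _)) t0
  exact ⟨⟨op e.unop.1, c⟩⟩

lemma EG_cone_objs (p q : EG F) : ∃ (z : EG F) (_ : z ⟶ p) (_ : z ⟶ q), True := by
  set X := yObj (I := I) p.1.unop with hX
  set Y := yObj (I := I) q.1.unop with hY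
  -- pair the two elements inside F (X ⨯ Y)
  let c0 : Cone (pair X Y ⋙ F) :=
    { pt := FintypeCat.of PUnit
      π := Discrete.natTrans (fun j =>
        match j with
        | ⟨WalkingPair.left⟩ => FintypeCat.homMk fun _ => p.2
        | ⟨WalkingPair.right⟩ => FintypeCat.homMk fun _ => q.2) }
  have hlim := isLimitOfPreserves F (prodIsLimit X Y)
  let w : F.obj (prodC X Y) := hlim.lift c0 PUnit.unit
  have hw1 : F.map (prodFst X Y) w = p.2 :=
    ConcreteCategory.congr_hom (hlim.fac c0 ⟨WalkingPair.left⟩) PUnit.unit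
  have hw2 : F.map (prodSnd X Y) w = q.2 :=
    ConcreteCategory.congr_hom (hlim.fac c0 ⟨WalkingPair.right⟩) PUnit.unit
  obtain ⟨e, c, hc⟩ := Scratch.fintype_jointly_surjective
    (F.mapCocone (canCocone (prodC X Y))) (isColimitOfPreserves F (canIsColimit _)) w
  -- e.unop = ⟨k, (g, h)⟩
  refine ⟨⟨op e.unop.1, c⟩, ?_, ?_, trivial⟩
  · refine ⟨(e.unop.2.1 : p.1.unop ⟶ e.unop.1).op, ?_⟩
    show F.map (yFun.map (e.unop.2.1 : p.1.unop ⟶ e.unop.1).op) c = p.2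
    have hcomp : (canCocone (prodC X Y)).ι.app e ≫ prodFst X Y =
        yFun.map (e.unop.2.1 : p.1.unop ⟶ e.unop.1).op := by
      ext j g
      rfl
    rw [← hcomp]
    refine (ConcreteCategory.congr_hom (F.map_comp _ _) c).trans ?_
    show F.map (prodFst X Y) (F.map ((canCocone (prodC X Y)).ι.app e) c) = p.2
    exact (congrArg (fun y => F.map (prodFst X Y) y) (show F.map ((canCocone (prodC X Y)).ι.app e) c = w from hc)).trans hw1
  · refine ⟨(e.unop.2.2 : q.1.unop ⟶ e.unop.1).op, ?_⟩
    show F.map (yFun.map (e.unop.2.2 : q.1.unop ⟶ e.unop.1).op) c = q.2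
    have hcomp : (canCocone (prodC X Y)).ι.app e ≫ prodSnd X Y =
        yFun.map (e.unop.2.2 : q.1.unop ⟶ e.unop.1).op := by
      ext j g
      rfl
    rw [← hcomp]
    refine (ConcreteCategory.congr_hom (F.map_comp _ _) c).trans ?_
    show F.map (prodSnd X Y) (F.map ((canCocone (prodC X Y)).ι.app e) c) = q.2
    exact (congrArg (fun y => F.map (prodSnd X Y) y) (show F.map ((canCocone (prodC X Y)).ι.app e) c = w from hc)).trans hw2

lemma EG_cone_maps {p q : EG F} (φ ψ : p ⟶ q) :
    ∃ (z : EG F) (χ : z ⟶ p), χ ≫ φ = χ ≫ ψ := by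
  set X := yObj (I := I) p.1.unop with hX
  set α : X ⟶ yObj q.1.unop := yFun.map φ.val with hα
  set β : X ⟶ yObj q.1.unop := yFun.map ψ.val with hβ
  have ha : F.map α p.2 = q.2 := φ.2
  have hb : F.map β p.2 = q.2 := ψ.2
  -- element of the equalizer
  let c0 : Cone (parallelPair α β ⋙ F) :=
    { pt := FintypeCat.of PUnit
      π :=
        { app := fun j =>
            match j with
            | WalkingParallelPair.zero => FintypeCat.homMk fun _ => p.2
            | WalkingParallelPair.one => FintypeCat.homMk fun _ => F.map α p.2
          naturality := by
            rintro x y f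
            change WalkingParallelPairHom x y at f
            cases f with
            | left => rfl
            | right =>
              ext u
              show F.map α p.2 = F.map β p.2
              rw [ha, hb]
            | id X =>
              ext u
              show _ = F.map (𝟙 _) _
              rw [CategoryTheory.Functor.map_id]
              rfl } }
  have hlim := isLimitOfPreserves F (eqIsLimit α β)
  let w : F.obj (eqC α β) := hlim.lift c0 PUnit.unit
  have hw : F.map (eqInc α β) w = p.2 :=
    ConcreteCategory.congr_hom (hlim.fac c0 WalkingParallelPair.zero) PUnit.unit
  obtain ⟨e, d, hd⟩ := Scratch.fintype_jointly_surjective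
    (F.mapCocone (canCocone (eqC α β))) (isColimitOfPreserves F (canIsColimit _)) w
  refine ⟨⟨op e.unop.1, d⟩, ?_, ?_⟩
  · refine ⟨(e.unop.2.1 : p.1.unop ⟶ e.unop.1).op, ?_⟩
    show F.map (yFun.map (e.unop.2.1 : p.1.unop ⟶ e.unop.1).op) d = p.2
    have hcomp : (canCocone (eqC α β)).ι.app e ≫ eqInc α β =
        yFun.map (e.unop.2.1 : p.1.unop ⟶ e.unop.1).op := by
      ext j g
      rfl
    rw [← hcomp]
    refine (ConcreteCategory.congr_hom (F.map_comp _ _) d).trans ?_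
    show F.map (eqInc α β) (F.map ((canCocone (eqC α β)).ι.app e) d) = p.2
    exact (congrArg (fun y => F.map (eqInc α β) y) (show F.map ((canCocone (eqC α β)).ι.app e) d = w from hd)).trans hw
  · apply Subtype.ext
    show (e.unop.2.1.op : op e.unop.1 ⟶ p.1) ≫ φ.val = e.unop.2.1.op ≫ ψ.val
    apply Quiver.Hom.unop_inj
    show φ.val.unop ≫ e.unop.2.1 = ψ.val.unop ≫ e.unop.2.1
    exact e.unop.2.2

lemma EG_isCofiltered : IsCofiltered (EG F) :=
  { cone_objs := fun p q => EG_cone_objs F p q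
    cone_maps := fun p q φ ψ => EG_cone_maps F φ ψ
    nonempty := EG_nonempty F }

end Flat

end Scratch5

namespace Scratch6
open Scratch2 Scratch3 Scratch5

variable {I : Type u} [SmallCategory I] [FinCategory I]
variable (F : (I ⥤ FintypeCat.{u}) ⥤ FintypeCat.{u})
variable [PreservesFiniteLimits F] [PreservesFiniteColimits F]

noncomputable def psi : Cone (𝟭 (EG F)) := by
  haveI := EG_isCofiltered F
  exact IsCofiltered.cone (𝟭 (EG F))

lemma hpi {A B : EG F} (f : A ⟶ B) : (psi F).π.app A ≫ f = (psi F).π.app B := by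
  have h := (psi F).π.naturality f
  simp only [Functor.const_obj_map, Functor.id_map] at h
  exact h.symm.trans (Category.id_comp _)

noncomputable def eEG : (psi F).pt ⟶ (psi F).pt := (psi F).π.app (psi F).pt

lemma eEG_idem : eEG F ≫ eEG F = eEG F := hpi F (eEG F)

lemma fixed_eq_pi {A : EG F} (m : (psi F).pt ⟶ A) (hm : eEG F ≫ m = m) :
    m = (psi F).π.app A := by
  rw [← hm]
  exact hpi F m

/-- The pro-representing object in `Karoubi I`. -/
noncomputable def xK : Karoubi I where
  X := (psi F).pt.1.unop
  p := (eEG F).val.unop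
  idem := by
    have h := congrArg Subtype.val (eEG_idem F)
    have h2 := congrArg Quiver.Hom.unop h
    exact h2

noncomputable def av (i : Iᵒᵖ) (g : i.unop ⟶ (xK F).X) : F.obj (yFun.obj i) :=
  F.map (yFun.map g.op) (psi F).pt.2

noncomputable def bv (i : Iᵒᵖ) (a : F.obj (yFun.obj i)) : i.unop ⟶ (xK F).X :=
  ((psi F).π.app ⟨i, a⟩).val.unop

lemma bv_fixed (i : Iᵒᵖ) (a : F.obj (yFun.obj i)) : bv F i a ≫ (xK F).p = bv F i a := by
  have h : eEG F ≫ (psi F).π.app ⟨i, a⟩ = (psi F).π.app ⟨i, a⟩ := hpi F _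
  have h2 := congrArg (fun (m : (psi F).pt ⟶ (⟨i, a⟩ : EG F)) => m.val.unop) h
  exact h2

lemma av_bv (i : Iᵒᵖ) (a : F.obj (yFun.obj i)) : av F i (bv F i a) = a := by
  have h := ((psi F).π.app ⟨i, a⟩).2
  show F.map (yFun.map (((psi F).π.app ⟨i, a⟩).val.unop).op) (psi F).pt.2 = a
  rw [Quiver.Hom.op_unop]
  exact h

lemma bv_av (i : Iᵒᵖ) (g : i.unop ⟶ (xK F).X) (hg : g ≫ (xK F).p = g) :
    bv F i (av F i g) = g := by
  let m : (psi F).pt ⟶ (⟨i, av F i g⟩ : EG F) := ⟨g.op, rfl⟩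
  have hm : eEG F ≫ m = m := by
    apply Subtype.ext
    show (eEG F).val ≫ g.op = g.op
    apply Quiver.Hom.unop_inj
    show g ≫ (eEG F).val.unop = g
    exact hg
  have h := fixed_eq_pi F m hm
  have h2 := congrArg (fun (m : (psi F).pt ⟶ (⟨i, av F i g⟩ : EG F)) => m.val.unop) h
  exact h2.symm

lemma av_nat {i j : Iᵒᵖ} (v : i ⟶ j) (g : i.unop ⟶ (xK F).X) :
    av F j (v.unop ≫ g) = F.map (yFun.map v) (av F i g) := by
  show F.map (yFun.map (v.unop ≫ g).op) (psi F).pt.2 = _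
  have : (v.unop ≫ g).op = g.op ≫ v := rfl
  rw [this, yFun.map_comp, F.map_comp]
  rfl

/-- the natural isomorphism between `yFun ⋙ F` and `yFun ⋙ karoubiEval (xK F)`. -/
noncomputable def etaIso : (yFun ⋙ F : Iᵒᵖ ⥤ FintypeCat.{u}) ≅ yFun ⋙ karoubiEval (xK F) :=
  NatIso.ofComponents
    (fun i =>
      { hom := FintypeCat.homMk fun a => ⟨bv F i a, bv_fixed F i a⟩
        inv := FintypeCat.homMk fun g => av F i g.1
        hom_inv_id := by
          ext a
          exact av_bv F i a
        inv_hom_id := by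
          ext g
          exact Subtype.ext (bv_av F i g.1 g.2) })
    (fun {i j} v => by
      ext a
      apply Subtype.ext
      show bv F j (F.map (yFun.map v) a) = v.unop ≫ bv F i a
      have h1 : F.map (yFun.map v) a = av F j (v.unop ≫ bv F i a) := by
        rw [av_nat F v, av_bv F i a]
      rw [h1]
      apply bv_av
      rw [Category.assoc, bv_fixed F i a])

end Scratch6

namespace Scratch7
open Scratch2 Scratch3 Scratch5 Scratch6

variable {I : Type u} [SmallCategory I] [FinCategory I]
variable (F : (I ⥤ FintypeCat.{u}) ⥤ FintypeCat.{u})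
variable [PreservesFiniteLimits F] [PreservesFiniteColimits F]

noncomputable def wIso (X : I ⥤ FintypeCat.{u}) :
    (canDiagram X ⋙ F : _ ⥤ FintypeCat.{u}) ≅ canDiagram X ⋙ karoubiEval (xK F) :=
  Functor.isoWhiskerLeft (CategoryOfElements.π (X ⋙ FintypeCat.incl)).op (etaIso F)

noncomputable def finalIso : F ≅ karoubiEval (xK F) := by
  haveI := karoubiEval_preservesFiniteColimits (I := I) (xK F)
  refine NatIso.ofComponents (fun X => IsColimit.coconePointsIsoOfNatIso
    (isColimitOfPreserves F (canIsColimit X))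
    (isColimitOfPreserves (karoubiEval (xK F)) (canIsColimit X)) (wIso F X)) ?_
  intro X Y u
  apply (isColimitOfPreserves F (canIsColimit X)).hom_ext
  intro e
  have hci : (canCocone X).ι.app e ≫ u =
      (canCocone Y).ι.app (op (mkE Y e.unop.1 (u.app e.unop.1 e.unop.2))) := by
    ext j g
    exact ConcreteCategory.congr_hom (u.naturality g) e.unop.2
  have h1 := IsColimit.comp_coconePointsIsoOfNatIso_hom
    (isColimitOfPreserves F (canIsColimit Y))
    (isColimitOfPreserves (karoubiEval (xK F)) (canIsColimit Y)) (wIso F Y)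
    (op (mkE Y e.unop.1 (u.app e.unop.1 e.unop.2)))
  have h2 := IsColimit.comp_coconePointsIsoOfNatIso_hom
    (isColimitOfPreserves F (canIsColimit X))
    (isColimitOfPreserves (karoubiEval (xK F)) (canIsColimit X)) (wIso F X) e
  simp only [Functor.mapCocone_ι_app] at h1 h2
  show F.map ((canCocone X).ι.app e) ≫ F.map u ≫ _ = F.map ((canCocone X).ι.app e) ≫ _ ≫ _
  have hF : F.map ((canCocone X).ι.app e) ≫ F.map u =
      F.map ((canCocone Y).ι.app (op (mkE Y e.unop.1 (u.app e.unop.1 e.unop.2)))) :=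
    (F.map_comp _ _).symm.trans (congrArg F.map hci)
  have hK : (karoubiEval (xK F)).map ((canCocone X).ι.app e) ≫ (karoubiEval (xK F)).map u =
      (karoubiEval (xK F)).map ((canCocone Y).ι.app (op (mkE Y e.unop.1 (u.app e.unop.1 e.unop.2)))) :=
    ((karoubiEval (xK F)).map_comp _ _).symm.trans (congrArg (karoubiEval (xK F)).map hci)
  exact (Category.assoc _ _ _).symm.trans ((congrArg (· ≫ _) hF).trans (h1.trans
    ((congrArg (_ ≫ ·) hK.symm).trans ((Category.assoc _ _ _).symm.trans
      ((congrArg (· ≫ _) h2.symm).trans (Category.assoc _ _ _))))))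

end Scratch7


theorem stmt_14 (I : Type u) [SmallCategory I] [FinCategory I] :
    Nonempty ((ObjectProperty.FullSubcategory fun F : (I ⥤ FintypeCat.{u}) ⥤ FintypeCat.{u} =>
        PreservesFiniteLimits F ∧ PreservesFiniteColimits F) ≌ Karoubi I) ∧
      ∀ F : (I ⥤ FintypeCat.{u}) ⥤ FintypeCat.{u},
        PreservesFiniteLimits F → PreservesFiniteColimits F →
          ∃ x : Karoubi I, Nonempty (F ≅ karoubiEval x) := by
  constructor
  · let P : ObjectProperty ((I ⥤ FintypeCat.{u}) ⥤ FintypeCat.{u}) :=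
      fun F => PreservesFiniteLimits F ∧ PreservesFiniteColimits F
    let Φ : Karoubi I ⥤ P.FullSubcategory :=
      ObjectProperty.lift P (Scratch3.toEval)
        (fun x => ⟨Scratch3.karoubiEval_preservesFiniteLimits x,
                   Scratch3.karoubiEval_preservesFiniteColimits x⟩)
    haveI : Φ.EssSurj := by
      constructor
      intro Fo
      haveI := Fo.property.1
      haveI := Fo.property.2
      exact ⟨Scratch6.xK Fo.obj, ⟨P.ι.preimageIso
        ((Scratch7.finalIso Fo.obj).symm)⟩⟩
    haveI : Φ.IsEquivalence := {}
    exact ⟨Φ.asEquivalence.symm⟩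
  · intro F hl hc
    haveI := hl
    haveI := hc
    exact ⟨Scratch6.xK F, ⟨Scratch7.finalIso F⟩⟩
end
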